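/- arXiv:1302.4632 — 6 statements merged into one kernel-verified Lean document; each statement's English description precedes it below -/
import Mathlib

section
/- Assume q satisfies Condition A, and let (λ_n)_{n≥1} be an enumeration of the zeros of the entire function a, counted with multiplicity (all zeros lie in the open lower half-plane, so λ_n ≠ 0). Then Σ_{n≥1} |Im λ_n| / |λ_n|² < ∞. -/
open MeasureTheory Set Filter

noncomputable def Gker (q : ℝ → ℂ) (x s : ℝ) (l : ℂ) : ℂ :=
  (starRingEnd ℂ) (q s) *
    ∫ t in x..s, Complex.exp (2 * Complex.I * l * ((s : ℂ) - (t : ℂ))) * q t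

noncomputable def chiIter (q : ℝ → ℂ) : ℕ → ℝ → ℂ → ℂ
  | 0, _, _ => 1
  | n + 1, x, l => ∫ s in Set.Ioi x, Gker q x s l * chiIter q n s l

noncomputable def chiFun (q : ℝ → ℂ) (x : ℝ) (l : ℂ) : ℂ :=
  1 + ∑' n : ℕ, chiIter q (n + 1) x l

noncomputable def aFun (q : ℝ → ℂ) (l : ℂ) : ℂ := chiFun q 0 l

def CondA (q : ℝ → ℂ) (γ : ℝ) : Prop :=
  0 < γ ∧ convexHull ℝ (tsupport q) = Set.Icc 0 γ

noncomputable def normL1 (q : ℝ → ℂ) : ℝ := ∫ t : ℝ, ‖q t‖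
noncomputable def normL2 (q : ℝ → ℂ) : ℝ := Real.sqrt (∫ t : ℝ, ‖q t‖ ^ 2)
noncomputable def PhiF (q : ℝ → ℂ) (x : ℝ) : ℝ := Real.cosh (∫ s in Set.Ioi x, ‖q s‖)

def ZeroOrder (f : ℂ → ℂ) (z : ℂ) (m : ℕ) : Prop :=
  ∃ g : ℂ → ℂ, Differentiable ℂ g ∧ g z ≠ 0 ∧ ∀ w, f w = (w - z) ^ m * g w

/-! ### Auxiliary material -/

open Topology Complex

noncomputable def Rrem (q : ℝ → ℂ) (x : ℝ) : ℝ := ∫ t in Set.Ioi x, ‖q t‖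

section Estimates

variable {q : ℝ → ℂ}

lemma Rrem_nonneg (x : ℝ) : 0 ≤ Rrem q x := by
  apply setIntegral_nonneg measurableSet_Ioi; intro t _; positivity

lemma Rrem_le (hq1 : Integrable q) (x : ℝ) : Rrem q x ≤ normL1 q :=
  setIntegral_le_integral hq1.norm (Eventually.of_forall fun t => norm_nonneg _)

lemma normL1_nonneg : 0 ≤ normL1 q := integral_nonneg fun t => norm_nonneg _

lemma Rrem_antitone (hq1 : Integrable q) : Antitone (Rrem q) := by
  intro x y hxy
  exact setIntegral_mono_set (hq1.norm.integrableOn) (Eventually.of_forall fun t => norm_nonneg _)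
    (HasSubset.Subset.eventuallyLE (Set.Ioi_subset_Ioi hxy))

lemma Rrem_measurable (hq1 : Integrable q) : Measurable (Rrem q) :=
  (Rrem_antitone hq1).measurable

lemma integrable_g_Rpow (hq1 : Integrable q) (n : ℕ) : Integrable (fun s => ‖q s‖ * Rrem q s ^ n) := by
  have : Integrable (fun s => Rrem q s ^ n * ‖q s‖) :=
    hq1.norm.bdd_mul ((Rrem_measurable hq1).pow_const n).aestronglyMeasurable
      (c := normL1 q ^ n) (Eventually.of_forall fun s => by
        rw [Real.norm_eq_abs, _root_.abs_of_nonneg (pow_nonneg (Rrem_nonneg s) n)]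
        exact pow_le_pow_left₀ (Rrem_nonneg s) (Rrem_le hq1 s) n)
  simpa [mul_comm] using this

/-- The key iterated-integral identity. -/
lemma key_int (hq1 : Integrable q) (n : ℕ) (x : ℝ) :
    ∫ s in Set.Ioi x, ‖q s‖ * Rrem q s ^ n = Rrem q x ^ (n + 1) / (n + 1) := by
  induction n generalizing x with
  | zero => simp [Rrem]
  | succ n ih =>
    have hgi : Integrable (fun t => ‖q t‖) := hq1.norm
    have hci : Integrable (fun s => ‖q s‖ * Rrem q s ^ n) := integrable_g_Rpow hq1 n
    have hci' : Integrable (fun s => ‖q s‖ * Rrem q s ^ (n + 1)) := integrable_g_Rpow hq1 (n + 1)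
    set F : ℝ → ℝ → ℝ :=
      fun s t => if s < t then (‖q s‖ * Rrem q s ^ n) * ‖q t‖ else 0 with hFdef
    have hFint : Integrable (Function.uncurry F)
        ((volume.restrict (Set.Ioi x)).prod volume) := by
      have hW : Integrable (fun p : ℝ × ℝ => (‖q p.1‖ * Rrem q p.1 ^ n) * ‖q p.2‖)
          ((volume.restrict (Set.Ioi x)).prod volume) := (hci.restrict).mul_prod hgi
      have hmeas : MeasurableSet {p : ℝ × ℝ | p.1 < p.2} :=
        measurableSet_lt measurable_fst measurable_snd
      have : Function.uncurry F = Set.indicator {p : ℝ × ℝ | p.1 < p.2}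
          (fun p => (‖q p.1‖ * Rrem q p.1 ^ n) * ‖q p.2‖) := by
        funext p
        simp only [Function.uncurry, hFdef, Set.indicator_apply, Set.mem_setOf_eq]
      rw [this]
      exact hW.indicator hmeas
    have hinner : ∀ s : ℝ, ∫ t, F s t = (‖q s‖ * Rrem q s ^ n) * Rrem q s := by
      intro s
      have : (fun t => F s t) =
          Set.indicator (Set.Ioi s) (fun t => (‖q s‖ * Rrem q s ^ n) * ‖q t‖) := by
        funext t
        simp only [hFdef, Set.indicator_apply, Set.mem_Ioi]
      rw [this, integral_indicator measurableSet_Ioi, integral_const_mul]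
      rfl
    have hstep1 : ∫ s in Set.Ioi x, ‖q s‖ * Rrem q s ^ (n + 1)
        = ∫ s in Set.Ioi x, ∫ t, F s t := by
      refine setIntegral_congr_fun measurableSet_Ioi fun s _ => ?_
      rw [hinner s, pow_succ]
      ring
    have hswap : ∫ s in Set.Ioi x, ∫ t, F s t = ∫ t, ∫ s in Set.Ioi x, F s t := by
      exact integral_integral_swap hFint
    have houter : ∀ t : ℝ, ∫ s in Set.Ioi x, F s t
        = (∫ s in Set.Ioo x t, ‖q s‖ * Rrem q s ^ n) * ‖q t‖ := by
      intro t
      have : (fun s => F s t) =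
          Set.indicator (Set.Iio t) (fun s => (‖q s‖ * Rrem q s ^ n) * ‖q t‖) := by
        funext s
        simp only [hFdef, Set.indicator_apply, Set.mem_Iio]
      rw [this, integral_indicator measurableSet_Iio,
        Measure.restrict_restrict measurableSet_Iio]
      rw [show Set.Iio t ∩ Set.Ioi x = Set.Ioo x t by
        rw [Set.inter_comm]; exact Set.Ioi_inter_Iio]
      rw [integral_mul_const]
    have hsplit : ∀ t : ℝ, x < t → ∫ s in Set.Ioo x t, ‖q s‖ * Rrem q s ^ n
        = Rrem q x ^ (n + 1) / (n + 1) - Rrem q t ^ (n + 1) / (n + 1) := by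
      intro t ht
      have hdisj : Disjoint (Set.Ioo x t) (Set.Ici t) := by
        refine Set.disjoint_left.2 fun s hs hs' => ?_
        exact absurd hs.2 (not_lt.2 hs')
      have hunion := setIntegral_union hdisj measurableSet_Ici
        (hci.integrableOn (s := Set.Ioo x t)) (hci.integrableOn (s := Set.Ici t))
      rw [Set.Ioo_union_Ici_eq_Ioi ht] at hunion
      have hIci : ∫ s in Set.Ici t, ‖q s‖ * Rrem q s ^ n
          = Rrem q t ^ (n + 1) / (n + 1) := by
        rw [integral_Ici_eq_integral_Ioi, ih t]
      rw [ih x, hIci] at hunion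
      linarith
    have hfinal : ∫ t, ∫ s in Set.Ioi x, F s t
        = ∫ t in Set.Ioi x,
            (Rrem q x ^ (n + 1) / (n + 1) - Rrem q t ^ (n + 1) / (n + 1)) * ‖q t‖ := by
      rw [← integral_indicator measurableSet_Ioi]
      refine integral_congr_ae (Eventually.of_forall fun t => ?_)
      show (∫ s in Set.Ioi x, F s t) = Set.indicator (Set.Ioi x)
        (fun t => (Rrem q x ^ (n + 1) / (n + 1) - Rrem q t ^ (n + 1) / (n + 1)) * ‖q t‖) t
      rw [houter t]
      by_cases ht : x < t
      · rw [hsplit t ht, Set.indicator_of_mem (Set.mem_Ioi.2 ht)]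
      · rw [Set.indicator_of_notMem (by simpa using ht),
          Set.Ioo_eq_empty ht, Measure.restrict_empty]
        simp
    have hsub : ∫ t in Set.Ioi x,
        (Rrem q x ^ (n + 1) / (n + 1) - Rrem q t ^ (n + 1) / (n + 1)) * ‖q t‖
        = Rrem q x ^ (n + 1) / (n + 1) * Rrem q x
          - (∫ t in Set.Ioi x, ‖q t‖ * Rrem q t ^ (n + 1)) / (n + 1) := by
      have h1 : Integrable (fun t => Rrem q x ^ (n + 1) / (n + 1) * ‖q t‖)
          (volume.restrict (Set.Ioi x)) := (hgi.restrict).const_mul _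
      have h2 : Integrable (fun t => Rrem q t ^ (n + 1) / (n + 1) * ‖q t‖)
          (volume.restrict (Set.Ioi x)) := by
        have := (hci'.restrict (s := Set.Ioi x)).div_const ((n : ℝ) + 1)
        refine this.congr (Eventually.of_forall fun t => ?_)
        ring
      have : ∫ t in Set.Ioi x,
          (Rrem q x ^ (n + 1) / (n + 1) - Rrem q t ^ (n + 1) / (n + 1)) * ‖q t‖
          = ∫ t in Set.Ioi x, (Rrem q x ^ (n + 1) / (n + 1) * ‖q t‖
            - Rrem q t ^ (n + 1) / (n + 1) * ‖q t‖) := by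
        refine integral_congr_ae (Eventually.of_forall fun t => ?_)
        ring
      rw [this, integral_sub h1 h2, integral_const_mul]
      congr 1
      rw [← integral_div]
      refine integral_congr_ae (Eventually.of_forall fun t => ?_)
      ring
    have key : ∫ s in Set.Ioi x, ‖q s‖ * Rrem q s ^ (n + 1)
        = Rrem q x ^ (n + 1) / (n + 1) * Rrem q x
          - (∫ t in Set.Ioi x, ‖q t‖ * Rrem q t ^ (n + 1)) / (n + 1) := by
      conv_lhs => rw [hstep1, hswap, hfinal, hsub]
    set J := ∫ s in Set.Ioi x, ‖q s‖ * Rrem q s ^ (n + 1) with hJ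
    have h1 : J * ((n : ℝ) + 1) + J = Rrem q x ^ (n + 1) * Rrem q x := by
      have h := key
      have hd : ((n : ℝ) + 1) ≠ 0 := by positivity
      field_simp at h
      linarith
    have h2 : Rrem q x ^ (n + 1) * Rrem q x = Rrem q x ^ (n + 1 + 1) := by ring
    rw [eq_div_iff (by push_cast; positivity)]
    push_cast
    linear_combination h1 + h2

/-- Pointwise bound for the iterates. -/
lemma chi_bound (hq1 : Integrable q) {γ : ℝ} (hγ : 0 < γ) (hsupp : tsupport q ⊆ Set.Icc 0 γ) (l : ℂ) :
    ∀ n x, ‖chiIter q n x l‖ ≤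
      Real.exp (2 * max 0 (-l.im) * max (γ - max x 0) 0) * (normL1 q * Rrem q x) ^ n / (Nat.factorial n : ℝ) := by
  set Y := max 0 (-l.im) with hYdef
  have hY0 : 0 ≤ Y := le_max_left _ _
  have hQ0 : 0 ≤ normL1 q := normL1_nonneg (q := q)
  intro n
  induction n with
  | zero =>
    intro x
    simp only [chiIter, norm_one, pow_zero, mul_one, Nat.factorial_zero, Nat.cast_one, div_one]
    exact Real.one_le_exp (by positivity)
  | succ n ih =>
    intro x
    set E := Real.exp (2 * Y * max (γ - max x 0) 0) with hEdef
    have hE1 : 1 ≤ E := Real.one_le_exp (by positivity)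
    set C := E * (normL1 q ^ (n + 1) / (Nat.factorial n : ℝ)) with hCdef
    have hC0 : 0 ≤ C := by
      have : (0:ℝ) < Nat.factorial n := by exact_mod_cast Nat.factorial_pos n
      positivity
    have hDint : Integrable (fun s => C * (‖q s‖ * Rrem q s ^ n))
        (volume.restrict (Set.Ioi x)) := ((integrable_g_Rpow hq1 n).restrict).const_mul C
    have hpoint : ∀ s ∈ Set.Ioi x,
        ‖Gker q x s l * chiIter q n s l‖ ≤ C * (‖q s‖ * Rrem q s ^ n) := by
      intro s hs
      have hxs : x < s := hs
      by_cases hqs : q s = 0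
      · have : Gker q x s l = 0 := by simp [Gker, hqs]
        rw [this, zero_mul, norm_zero]
        have : 0 ≤ Rrem q s ^ n := pow_nonneg (Rrem_nonneg s) n
        positivity
      · have hmem : s ∈ Set.Icc 0 γ := hsupp (subset_tsupport q (Function.mem_support.2 hqs))
        have h0s : (0:ℝ) ≤ s := hmem.1
        have hsγ : s ≤ γ := hmem.2
        -- inner integral bound
        have hI : ‖∫ t in x..s, Complex.exp (2 * Complex.I * l * ((s:ℂ) - (t:ℂ))) * q t‖
            ≤ Real.exp (2 * Y * (s - max x 0)) * normL1 q := by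
          have hb : ∀ t ∈ Set.Icc x s,
              ‖Complex.exp (2 * Complex.I * l * ((s:ℂ) - (t:ℂ))) * q t‖
                ≤ Real.exp (2 * Y * (s - max x 0)) * ‖q t‖ := by
            intro t ht
            by_cases hqt : q t = 0
            · simp only [hqt, mul_zero, norm_zero]
              positivity
            · have htmem : t ∈ Set.Icc 0 γ :=
                hsupp (subset_tsupport q (Function.mem_support.2 hqt))
              have h0t : (0:ℝ) ≤ t := htmem.1
              have hts : t ≤ s := ht.2
              have htx : x ≤ t := ht.1
              rw [norm_mul]
              have harg : 2 * Complex.I * l * ((s:ℂ) - (t:ℂ))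
                  = (((s - t : ℝ)):ℂ) * (2 * Complex.I * l) := by push_cast; ring
              have hre : (2 * Complex.I * l * ((s:ℂ) - (t:ℂ))).re = (s - t) * (-(2 * l.im)) := by
                rw [harg]
                simp only [Complex.mul_re, Complex.mul_im, Complex.I_re, Complex.I_im,
                  Complex.ofReal_re, Complex.ofReal_im, Complex.re_ofNat, Complex.im_ofNat]
                ring
              have hexp : ‖Complex.exp (2 * Complex.I * l * ((s:ℂ) - (t:ℂ)))‖
                  = Real.exp ((s - t) * (-(2 * l.im))) := by
                rw [Complex.norm_exp, hre]
              rw [hexp]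
              have hYim : -l.im ≤ Y := le_max_right _ _
              have hmaxle : max x 0 ≤ t := max_le htx h0t
              have : (s - t) * (-(2 * l.im)) ≤ 2 * Y * (s - max x 0) := by
                nlinarith [hY0, hYim, hts, hmaxle]
              exact mul_le_mul_of_nonneg_right (Real.exp_le_exp.2 this) (norm_nonneg _)
          have hint1 : IntervalIntegrable
              (fun t => ‖Complex.exp (2 * Complex.I * l * ((s:ℂ) - (t:ℂ))) * q t‖)
              volume x s := by
            refine IntervalIntegrable.norm ?_
            have hcont : ContinuousOn
                (fun t : ℝ => Complex.exp (2 * Complex.I * l * ((s:ℂ) - (t:ℂ))))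
                (Set.uIcc x s) := by
              fun_prop
            exact (hq1.intervalIntegrable).continuousOn_mul hcont
          have hint2 : IntervalIntegrable
              (fun t => Real.exp (2 * Y * (s - max x 0)) * ‖q t‖) volume x s :=
            (hq1.norm.intervalIntegrable).const_mul _
          calc ‖∫ t in x..s, Complex.exp (2 * Complex.I * l * ((s:ℂ) - (t:ℂ))) * q t‖
              ≤ ∫ t in x..s, ‖Complex.exp (2 * Complex.I * l * ((s:ℂ) - (t:ℂ))) * q t‖ :=
                intervalIntegral.norm_integral_le_integral_norm hxs.le
            _ ≤ ∫ t in x..s, Real.exp (2 * Y * (s - max x 0)) * ‖q t‖ :=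
                intervalIntegral.integral_mono_on hxs.le hint1 hint2 hb
            _ = Real.exp (2 * Y * (s - max x 0)) * ∫ t in x..s, ‖q t‖ := by
                rw [intervalIntegral.integral_const_mul]
            _ ≤ Real.exp (2 * Y * (s - max x 0)) * normL1 q := by
                refine mul_le_mul_of_nonneg_left ?_ (Real.exp_nonneg _)
                rw [intervalIntegral.integral_of_le hxs.le]
                exact setIntegral_le_integral hq1.norm
                  (Eventually.of_forall fun t => norm_nonneg _)
        -- induction hypothesis at s
        have hIH := ih s
        have hmaxs : max s 0 = s := max_eq_left h0s
        have hmaxγs : max (γ - s) 0 = γ - s := max_eq_left (by linarith)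
        rw [hmaxs, hmaxγs] at hIH
        calc ‖Gker q x s l * chiIter q n s l‖
            = ‖q s‖ * ‖∫ t in x..s, Complex.exp (2 * Complex.I * l * ((s:ℂ) - (t:ℂ))) * q t‖
              * ‖chiIter q n s l‖ := by
              rw [Gker, norm_mul, norm_mul, RCLike.norm_conj]
          _ ≤ ‖q s‖ * (Real.exp (2 * Y * (s - max x 0)) * normL1 q)
              * (Real.exp (2 * Y * (γ - s)) * (normL1 q * Rrem q s) ^ n / (Nat.factorial n : ℝ)) := by
              gcongr
          _ = (Real.exp (2 * Y * (s - max x 0)) * Real.exp (2 * Y * (γ - s)))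
              * (normL1 q ^ (n + 1) / (Nat.factorial n : ℝ)) * (‖q s‖ * Rrem q s ^ n) := by
              rw [mul_pow]
              ring
          _ ≤ C * (‖q s‖ * Rrem q s ^ n) := by
              refine mul_le_mul_of_nonneg_right ?_
                (mul_nonneg (norm_nonneg _) (pow_nonneg (Rrem_nonneg s) n))
              rw [hCdef]
              refine mul_le_mul_of_nonneg_right ?_ (by
                have : (0:ℝ) < Nat.factorial n := by exact_mod_cast Nat.factorial_pos n
                positivity)
              rw [← Real.exp_add, hEdef]
              refine Real.exp_le_exp.2 ?_
              have h1 : 2 * Y * (s - max x 0) + 2 * Y * (γ - s) = 2 * Y * (γ - max x 0) := by ring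
              rw [h1]
              exact mul_le_mul_of_nonneg_left (le_max_left _ _) (by positivity)
    calc ‖chiIter q (n + 1) x l‖
        = ‖∫ s in Set.Ioi x, Gker q x s l * chiIter q n s l‖ := by rw [chiIter]
      _ ≤ ∫ s in Set.Ioi x, ‖Gker q x s l * chiIter q n s l‖ :=
          norm_integral_le_integral_norm _
      _ ≤ ∫ s in Set.Ioi x, C * (‖q s‖ * Rrem q s ^ n) := by
          refine integral_mono_of_nonneg (Eventually.of_forall fun s => norm_nonneg _) hDint ?_
          exact (ae_restrict_mem measurableSet_Ioi).mono hpoint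
      _ = C * (Rrem q x ^ (n + 1) / (n + 1)) := by
          rw [integral_const_mul, key_int hq1 n x]
      _ = E * (normL1 q * Rrem q x) ^ (n + 1) / (Nat.factorial (n + 1) : ℝ) := by
          rw [hCdef, mul_pow, Nat.factorial_succ]
          have h1 : (0:ℝ) < Nat.factorial n := by exact_mod_cast Nat.factorial_pos n
          have h2 : (0:ℝ) < (n : ℝ) + 1 := by positivity
          push_cast
          field_simp

/-- Bound for `aFun` on half-planes. -/
lemma aFun_bound (hq1 : Integrable q) {γ : ℝ} (hγ : 0 < γ) (hsupp : tsupport q ⊆ Set.Icc 0 γ) :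
    ∃ M : ℝ, 1 ≤ M ∧ ∀ l : ℂ, ‖aFun q l‖ ≤ M * Real.exp (2 * γ * max 0 (-l.im)) := by
  have hQ0 : 0 ≤ normL1 q := normL1_nonneg (q := q)
  have hQR0 : 0 ≤ normL1 q * Rrem q 0 := mul_nonneg hQ0 (Rrem_nonneg 0)
  have hsum0 : Summable (fun n : ℕ => (normL1 q * Rrem q 0) ^ n / (Nat.factorial n : ℝ)) :=
    Real.summable_pow_div_factorial _
  have hsum : Summable
      (fun n : ℕ => (normL1 q * Rrem q 0) ^ (n + 1) / (Nat.factorial (n + 1) : ℝ)) :=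
    (summable_nat_add_iff 1).2 hsum0
  set K := ∑' n : ℕ, (normL1 q * Rrem q 0) ^ (n + 1) / (Nat.factorial (n + 1) : ℝ) with hKdef
  have hK0 : 0 ≤ K := tsum_nonneg fun n => by positivity
  refine ⟨1 + K, by linarith, fun l => ?_⟩
  set Y := max 0 (-l.im) with hYdef
  have hY0 : 0 ≤ Y := le_max_left _ _
  set E := Real.exp (2 * γ * Y) with hEdef
  have hE1 : 1 ≤ E := Real.one_le_exp (by positivity)
  have hterm : ∀ n : ℕ, ‖chiIter q (n + 1) 0 l‖
      ≤ E * ((normL1 q * Rrem q 0) ^ (n + 1) / (Nat.factorial (n + 1) : ℝ)) := by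
    intro n
    have h := chi_bound hq1 hγ hsupp l (n + 1) 0
    have h1 : max (γ - max (0:ℝ) 0) 0 = γ := by
      rw [max_self, sub_zero, max_eq_left hγ.le]
    rw [h1] at h
    calc ‖chiIter q (n + 1) 0 l‖
        ≤ Real.exp (2 * Y * γ) * (normL1 q * Rrem q 0) ^ (n + 1) / (Nat.factorial (n + 1) : ℝ) := h
      _ = E * ((normL1 q * Rrem q 0) ^ (n + 1) / (Nat.factorial (n + 1) : ℝ)) := by
          rw [hEdef, mul_div_assoc]
          ring_nf
  have hsnorm : Summable (fun n : ℕ => ‖chiIter q (n + 1) 0 l‖) :=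
    Summable.of_nonneg_of_le (fun n => norm_nonneg _) hterm (hsum.mul_left E)
  have htsum : ‖∑' n : ℕ, chiIter q (n + 1) 0 l‖ ≤ E * K := by
    calc ‖∑' n : ℕ, chiIter q (n + 1) 0 l‖ ≤ ∑' n : ℕ, ‖chiIter q (n + 1) 0 l‖ :=
        norm_tsum_le_tsum_norm hsnorm
      _ ≤ ∑' n : ℕ, E * ((normL1 q * Rrem q 0) ^ (n + 1) / (Nat.factorial (n + 1) : ℝ)) :=
        Summable.tsum_le_tsum hterm hsnorm (hsum.mul_left E)
      _ = E * K := tsum_mul_left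
  calc ‖aFun q l‖ = ‖1 + ∑' n : ℕ, chiIter q (n + 1) 0 l‖ := rfl
    _ ≤ ‖(1 : ℂ)‖ + ‖∑' n : ℕ, chiIter q (n + 1) 0 l‖ := norm_add_le _ _
    _ ≤ 1 + E * K := by rw [norm_one]; linarith
    _ ≤ (1 + K) * E := by nlinarith

end Estimates

section Division

lemma div_single {u : ℂ → ℂ} (hu : Differentiable ℂ u) {z : ℂ} (h : u z = 0) :
    ∃ h₁ : ℂ → ℂ, Differentiable ℂ h₁ ∧ ∀ w, u w = (w - z) * h₁ w := by
  refine ⟨dslope u z, ?_, ?_⟩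
  · intro w
    rcases eq_or_ne w z with rfl | hw
    · obtain ⟨p, hp⟩ := hu.analyticAt w
      exact AnalyticAt.differentiableAt ⟨p.fslope, hp.has_fpower_series_dslope_fslope⟩
    · exact (differentiableAt_dslope_of_ne hw).2 (hu w)
  · intro w
    have h2 := sub_smul_dslope u z w
    rw [h, sub_zero] at h2
    rw [← h2, smul_eq_mul]

lemma div_pow_entire {P v : ℂ → ℂ} (hP : Continuous P) (hv : Continuous v) {z : ℂ} (hPz : P z ≠ 0) :
    ∀ (m : ℕ) (u : ℂ → ℂ), Differentiable ℂ u → (∀ w, w ≠ z → P w * u w = (w - z) ^ m * v w) →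
      ∃ h : ℂ → ℂ, Differentiable ℂ h ∧ (∀ w, u w = (w - z) ^ m * h w) ∧
        (∀ w, w ≠ z → P w * h w = v w) := by
  intro m
  induction m with
  | zero =>
    intro u hu heq
    exact ⟨u, hu, fun w => by simp, fun w hw => by simpa using heq w hw⟩
  | succ m ihm =>
    intro u hu heq
    have huz : u z = 0 := by
      have hcont1 : Continuous (fun w => P w * u w) := hP.mul hu.continuous
      have hcont2 : Continuous (fun w : ℂ => (w - z) ^ (m + 1) * v w) :=
        ((continuous_id.sub continuous_const).pow _).mul hv
      have heq' : (fun w => P w * u w) = fun w : ℂ => (w - z) ^ (m + 1) * v w := by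
        refine Continuous.ext_on (dense_compl_singleton z) hcont1 hcont2 fun w hw => ?_
        exact heq w hw
      have h3 := congrFun heq' z
      simp only [sub_self, zero_pow (Nat.succ_ne_zero m), zero_mul] at h3
      exact (mul_eq_zero.1 h3).resolve_left hPz
    obtain ⟨h₁, hh₁, hfac⟩ := div_single hu huz
    have heq₁ : ∀ w, w ≠ z → P w * h₁ w = (w - z) ^ m * v w := by
      intro w hw
      have h2 := heq w hw
      rw [hfac w, pow_succ] at h2
      have hwz : w - z ≠ 0 := sub_ne_zero.2 hw
      have h4 : (w - z) * (P w * h₁ w) = (w - z) * ((w - z) ^ m * v w) := by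
        linear_combination h2
      exact mul_left_cancel₀ hwz h4
    obtain ⟨h, hh, hfac2, hlast⟩ := ihm h₁ hh₁ heq₁
    refine ⟨h, hh, fun w => ?_, hlast⟩
    rw [hfac w, hfac2 w, pow_succ]
    ring

lemma div_finset {f : ℂ → ℂ} (hf : Differentiable ℂ f) (m : ℂ → ℕ) (S : Finset ℂ)
    (hfac : ∀ z ∈ S, ∃ g : ℂ → ℂ, Differentiable ℂ g ∧ g z ≠ 0 ∧
      ∀ w, f w = (w - z) ^ m z * g w) :
    ∃ h : ℂ → ℂ, Differentiable ℂ h ∧ ∀ w, f w = (∏ z ∈ S, (w - z) ^ m z) * h w := by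
  classical
  induction S using Finset.induction_on with
  | empty => exact ⟨f, hf, fun w => by simp⟩
  | @insert z₀ S hz₀ ih =>
    obtain ⟨h, hh, hEq⟩ := ih fun z hz => hfac z (Finset.mem_insert_of_mem hz)
    obtain ⟨g₀, hg₀, hg₀z, hfz₀⟩ := hfac z₀ (Finset.mem_insert_self _ _)
    have hPz : (∏ z ∈ S, (z₀ - z) ^ m z) ≠ 0 := by
      refine Finset.prod_ne_zero_iff.2 fun z hz => ?_
      refine pow_ne_zero _ (sub_ne_zero.2 ?_)
      rintro rfl
      exact hz₀ hz
    have hP : Continuous (fun w : ℂ => ∏ z ∈ S, (w - z) ^ m z) :=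
      continuous_finset_prod _ fun z _ => (continuous_id.sub continuous_const).pow _
    have heq' : ∀ w, w ≠ z₀ → (∏ z ∈ S, (w - z) ^ m z) * h w = (w - z₀) ^ m z₀ * g₀ w := by
      intro w _
      rw [← hEq w, hfz₀ w]
    obtain ⟨h', hh', hfac', -⟩ := div_pow_entire hP hg₀.continuous hPz (m z₀) h hh heq'
    refine ⟨h', hh', fun w => ?_⟩
    rw [Finset.prod_insert hz₀, hEq w, hfac' w]
    ring

end Division

section Zeros

lemma zeros_finite {f : ℂ → ℂ} (hf : Differentiable ℂ f) (hne : ∃ w, f w ≠ 0)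
    {K : Set ℂ} (hK : IsCompact K) : {z | z ∈ K ∧ f z = 0}.Finite := by
  have hZ : {z | z ∈ K ∧ f z = 0} = K ∩ f ⁻¹' {0} := by
    ext w; simp [Set.mem_inter_iff]
  rw [hZ]
  have hcl : IsClosed (f ⁻¹' {0}) := isClosed_singleton.preimage hf.continuous
  have hcpt : IsCompact (K ∩ f ⁻¹' {0}) := hK.inter_right hcl
  refine hcpt.finite ?_
  rw [isDiscrete_iff_discreteTopology, discreteTopology_subtype_iff]
  intro x hx
  rcases (hf.analyticAt x).eventually_eq_zero_or_eventually_ne_zero with hev | hev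
  · exfalso
    obtain ⟨w, hw⟩ := hne
    exact hw ((hf.differentiableOn.analyticOnNhd
      isOpen_univ).eqOn_zero_of_preconnected_of_eventuallyEq_zero isPreconnected_univ
      (Set.mem_univ x) hev (Set.mem_univ w))
  · rw [Filter.inf_principal_eq_bot]
    refine hev.mono fun w hw => ?_
    simp only [Set.mem_compl_iff, Set.mem_inter_iff, Set.mem_preimage, Set.mem_singleton_iff]
    rintro ⟨-, hw0⟩
    exact hw hw0

lemma exists_good_point {f : ℂ → ℂ} (hf : Differentiable ℂ f) (hne : ∃ w, f w ≠ 0) (σ : ℝ)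
    (hσ : σ = 1 ∨ σ = -1) :
    ∃ y₀ : ℝ, 1 ≤ y₀ ∧ y₀ ≤ 2 ∧ f (σ * y₀ * Complex.I) ≠ 0 := by
  by_contra hcon
  push_neg at hcon
  set φ : ℝ → ℂ := fun y => (σ : ℂ) * (y : ℂ) * Complex.I with hφ
  have hφcont : Continuous φ := by
    apply Continuous.mul _ continuous_const
    exact continuous_const.mul Complex.continuous_ofReal
  have hK : IsCompact (φ '' Set.Icc 1 2) := isCompact_Icc.image hφcont
  have hfin := zeros_finite hf hne hK
  have hsub : φ '' Set.Icc 1 2 ⊆ {z | z ∈ φ '' Set.Icc 1 2 ∧ f z = 0} := by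
    rintro z ⟨y, hy, rfl⟩
    exact ⟨Set.mem_image_of_mem _ hy, hcon y hy.1 hy.2⟩
  have hfin2 : (φ '' Set.Icc 1 2).Finite := hfin.subset hsub
  have hσ0 : (σ : ℂ) ≠ 0 := by
    rcases hσ with rfl | rfl <;> norm_num
  have hinj : Set.InjOn φ (Set.Icc 1 2) := by
    intro a _ b _ hab
    have h1 : (σ : ℂ) * (a : ℂ) = (σ : ℂ) * (b : ℂ) :=
      mul_right_cancel₀ Complex.I_ne_zero hab
    have h2 : (a : ℂ) = (b : ℂ) := mul_left_cancel₀ hσ0 h1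
    exact_mod_cast h2
  exact Set.Icc_infinite (by norm_num : (1:ℝ) < 2)
    (Set.Finite.of_finite_image hfin2 hinj)

end Zeros

section Blaschke

lemma halfplane_blaschke {f : ℂ → ℂ} (hf : Differentiable ℂ f) {M : ℝ} (hM : 1 ≤ M)
    {σ : ℝ} (hσ : σ = 1 ∨ σ = -1) (hb : ∀ z : ℂ, 0 ≤ σ * z.im → ‖f z‖ ≤ M)
    {y₀ : ℝ} (hy₀ : 1 ≤ y₀) (hfw : f (σ * y₀ * Complex.I) ≠ 0)
    (S : Finset ℂ) (hS : ∀ z ∈ S, 0 < σ * z.im) (m : ℂ → ℕ)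
    (hw₀S : ∀ z ∈ S, (σ * y₀ * Complex.I : ℂ) ≠ z)
    (hfac : ∀ z ∈ S, ∃ g : ℂ → ℂ, Differentiable ℂ g ∧ g z ≠ 0 ∧
      ∀ w, f w = (w - z) ^ m z * g w) :
    ‖f (σ * y₀ * Complex.I)‖ *
      ∏ z ∈ S, (‖(σ * y₀ * Complex.I : ℂ) - (starRingEnd ℂ) z‖ /
        ‖(σ * y₀ * Complex.I : ℂ) - z‖) ^ m z ≤ M := by
  have hM0 : (0:ℝ) < M := lt_of_lt_of_le one_pos hM
  obtain ⟨h, hh, hEq⟩ := div_finset hf m S hfac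
  set Φ : ℂ → ℂ := fun w => (∏ z ∈ S, (w - (starRingEnd ℂ) z) ^ m z) * h w with hΦdef
  have hΦd : Differentiable ℂ Φ := by
    refine Differentiable.mul ?_ hh
    exact Differentiable.fun_finsetProd fun z _ =>
      ((differentiable_id.sub (differentiable_const _)).fun_pow _)
  -- norm identity
  have hnorm_eq : ∀ w : ℂ, ‖f w‖ * ∏ z ∈ S, ‖w - (starRingEnd ℂ) z‖ ^ m z
      = ‖Φ w‖ * ∏ z ∈ S, ‖w - z‖ ^ m z := by
    intro w
    have h1 : f w * ∏ z ∈ S, (w - (starRingEnd ℂ) z) ^ m z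
        = Φ w * ∏ z ∈ S, (w - z) ^ m z := by
      rw [hΦdef, hEq w]
      ring
    have h2 := congrArg norm h1
    simp only [norm_mul, norm_prod, norm_pow] at h2
    exact h2
  have hznotreal : ∀ z ∈ S, z.im ≠ 0 := by
    intro z hz hzim
    have := hS z hz
    rw [hzim, mul_zero] at this
    exact lt_irrefl 0 this
  -- on the real axis the two norms agree
  have hfactor_real : ∀ (x : ℝ), ∀ z ∈ S, ‖(x:ℂ) - (starRingEnd ℂ) z‖ = ‖(x:ℂ) - z‖ := by
    intro x z _
    calc ‖(x:ℂ) - (starRingEnd ℂ) z‖ = ‖(starRingEnd ℂ) ((x:ℂ) - (starRingEnd ℂ) z)‖ :=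
        (RCLike.norm_conj _).symm
      _ = ‖(x:ℂ) - z‖ := by rw [map_sub, Complex.conj_conj, Complex.conj_ofReal]
  have hΦreal : ∀ x : ℝ, ‖Φ ((x:ℝ):ℂ)‖ ≤ M := by
    intro x
    have hPpos : 0 < ∏ z ∈ S, ‖(x:ℂ) - z‖ ^ m z := by
      refine Finset.prod_pos fun z hz => pow_pos ?_ _
      rw [norm_pos_iff, sub_ne_zero]
      intro hxz
      exact hznotreal z hz (by rw [← hxz, Complex.ofReal_im])
    have heqn := hnorm_eq ((x:ℝ):ℂ)
    rw [Finset.prod_congr rfl fun z hz => by rw [hfactor_real x z hz]] at heqn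
    have hcancel : ‖f ((x:ℝ):ℂ)‖ = ‖Φ ((x:ℝ):ℂ)‖ := mul_right_cancel₀ hPpos.ne' heqn
    rw [← hcancel]
    exact hb _ (by simp)
  -- global bound for Φ on the σ-half-plane
  obtain ⟨C, hMC, hCbound⟩ : ∃ C : ℝ, M ≤ C ∧ ∀ w : ℂ, 0 ≤ σ * w.im → ‖Φ w‖ ≤ C := by
    have hKc : IsCompact (⋃ z ∈ (S : Set ℂ), Metric.closedBall z 1) :=
      S.finite_toSet.isCompact_biUnion fun z _ => isCompact_closedBall z 1
    obtain ⟨C₁, hC₁⟩ := hKc.exists_bound_of_continuousOn hΦd.continuous.continuousOn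
    set C₂ := M * ∏ z ∈ S, (1 + ‖(starRingEnd ℂ) z - z‖) ^ m z with hC₂def
    have hone_le : (1:ℝ) ≤ ∏ z ∈ S, (1 + ‖(starRingEnd ℂ) z - z‖) ^ m z := by
      have := Finset.prod_le_prod (f := fun _ : ℂ => (1:ℝ))
        (g := fun z => (1 + ‖(starRingEnd ℂ) z - z‖) ^ m z) (s := S)
        (fun z _ => zero_le_one) (fun z _ => by
          have h0 : (0:ℝ) ≤ ‖(starRingEnd ℂ) z - z‖ := norm_nonneg _
          calc (1:ℝ) = 1 ^ m z := (one_pow _).symm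
            _ ≤ (1 + ‖(starRingEnd ℂ) z - z‖) ^ m z :=
                pow_le_pow_left₀ (by norm_num) (by linarith) _)
      simpa using this
    have hMC₂ : M ≤ C₂ := le_mul_of_one_le_right hM0.le hone_le
    refine ⟨max C₁ C₂, hMC₂.trans (le_max_right _ _), fun w hw => ?_⟩
    by_cases hwK : w ∈ ⋃ z ∈ (S : Set ℂ), Metric.closedBall z 1
    · exact (hC₁ w hwK).trans (le_max_left _ _)
    · have hfar : ∀ z ∈ S, 1 ≤ ‖w - z‖ := by
        intro z hz
        have : w ∉ Metric.closedBall z 1 := fun hmem =>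
          hwK (Set.mem_biUnion (Finset.mem_coe.2 hz) hmem)
        rw [Metric.mem_closedBall, not_le, dist_eq_norm] at this
        exact this.le
      have hPpos : 0 < ∏ z ∈ S, ‖w - z‖ ^ m z :=
        Finset.prod_pos fun z hz => pow_pos (lt_of_lt_of_le one_pos (hfar z hz)) _
      have hub : ∏ z ∈ S, ‖w - (starRingEnd ℂ) z‖ ^ m z
          ≤ (∏ z ∈ S, ‖w - z‖ ^ m z) * ∏ z ∈ S, (1 + ‖(starRingEnd ℂ) z - z‖) ^ m z := by
        rw [← Finset.prod_mul_distrib]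
        refine Finset.prod_le_prod (fun z _ => pow_nonneg (norm_nonneg _) _) fun z hz => ?_
        rw [← mul_pow]
        refine pow_le_pow_left₀ (norm_nonneg _) ?_ _
        calc ‖w - (starRingEnd ℂ) z‖ = ‖(w - z) + (z - (starRingEnd ℂ) z)‖ := by
              rw [show w - (starRingEnd ℂ) z = (w - z) + (z - (starRingEnd ℂ) z) by ring]
          _ ≤ ‖w - z‖ + ‖z - (starRingEnd ℂ) z‖ := norm_add_le _ _
          _ = ‖w - z‖ + ‖(starRingEnd ℂ) z - z‖ := by
              rw [norm_sub_rev z ((starRingEnd ℂ) z)]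
          _ ≤ ‖w - z‖ + ‖w - z‖ * ‖(starRingEnd ℂ) z - z‖ := by
              nlinarith [mul_le_mul_of_nonneg_right (hfar z hz)
                (norm_nonneg ((starRingEnd ℂ) z - z))]
          _ = ‖w - z‖ * (1 + ‖(starRingEnd ℂ) z - z‖) := by ring
      have hkey := hnorm_eq w
      have hfwM : ‖f w‖ ≤ M := hb w hw
      have : ‖Φ w‖ * ∏ z ∈ S, ‖w - z‖ ^ m z ≤ C₂ * ∏ z ∈ S, ‖w - z‖ ^ m z := by
        rw [← hkey, hC₂def]
        calc ‖f w‖ * ∏ z ∈ S, ‖w - (starRingEnd ℂ) z‖ ^ m z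
            ≤ M * ((∏ z ∈ S, ‖w - z‖ ^ m z) * ∏ z ∈ S, (1 + ‖(starRingEnd ℂ) z - z‖) ^ m z) := by
              refine mul_le_mul hfwM (hub.trans (le_of_eq rfl)) ?_ hM0.le
              exact Finset.prod_nonneg fun z _ => pow_nonneg (norm_nonneg _) _
          _ = M * (∏ z ∈ S, (1 + ‖(starRingEnd ℂ) z - z‖) ^ m z) * ∏ z ∈ S, ‖w - z‖ ^ m z := by
              ring
      exact le_trans (le_of_mul_le_mul_right this hPpos) (le_max_right _ _)
  -- Phragmen–Lindelöf on the rotated half-plane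
  have hΦw₀ : ‖Φ (σ * y₀ * Complex.I)‖ ≤ M := by
    set Ψ : ℂ → ℂ := fun w => Φ ((σ:ℂ) * Complex.I * w) with hΨdef
    have hΨd : Differentiable ℂ Ψ := hΦd.comp (differentiable_id.const_mul _)
    have him_eq : ∀ w : ℂ, σ * ((σ:ℂ) * Complex.I * w).im = w.re := by
      intro w
      have hσ2 : σ * σ = 1 := by rcases hσ with rfl | rfl <;> norm_num
      simp only [Complex.mul_im, Complex.mul_re, Complex.ofReal_re, Complex.ofReal_im,
        Complex.I_re, Complex.I_im]
      linear_combination w.re * hσ2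
    have hPL : ∀ z : ℂ, 0 ≤ z.re → ‖Ψ z‖ ≤ M := by
      intro z hz
      refine PhragmenLindelof.right_half_plane_of_bounded_on_real hΨd.diffContOnCl
        ⟨1, one_lt_two, 0, ?_⟩ ?_ ?_ hz
      · refine Asymptotics.IsBigO.of_bound C ?_
        refine (Filter.eventually_principal.2 ?_).filter_mono inf_le_right
        intro w hw
        have h1 : ‖Ψ w‖ ≤ C := hCbound _ (by rw [him_eq w]; exact (le_of_lt hw))
        have h2 : ‖Real.exp (0 * ‖w‖ ^ (1:ℝ))‖ = 1 := by
          simp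
        rw [h2, mul_one]
        exact h1
      · refine ⟨C, ?_⟩
        rw [Filter.eventually_map]
        refine Filter.eventually_atTop.2 ⟨0, fun x hx => ?_⟩
        refine hCbound _ ?_
        rw [him_eq]
        simpa using hx
      · intro x
        have harg : (σ:ℂ) * Complex.I * ((x:ℝ) * Complex.I) = (((-σ * x : ℝ)):ℂ) := by
          push_cast
          rw [show (σ:ℂ) * Complex.I * ((x:ℂ) * Complex.I)
            = (σ:ℂ) * (x:ℂ) * (Complex.I * Complex.I) by ring, Complex.I_mul_I]
          ring
        show ‖Φ ((σ:ℂ) * Complex.I * ((x:ℝ) * Complex.I))‖ ≤ M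
        rw [harg]
        exact hΦreal _
    have := hPL ((y₀ : ℝ) : ℂ) (by simp; linarith)
    have harg2 : (σ:ℂ) * Complex.I * ((y₀:ℝ):ℂ) = (σ * y₀ * Complex.I : ℂ) := by
      push_cast; ring
    simp only [hΨdef] at this
    rwa [harg2] at this
  -- conclusion
  have hw₀ne : ∀ z ∈ S, (0:ℝ) < ‖(σ * y₀ * Complex.I : ℂ) - z‖ := by
    intro z hz
    rw [norm_pos_iff, sub_ne_zero]
    exact hw₀S z hz
  have hPpos : 0 < ∏ z ∈ S, ‖(σ * y₀ * Complex.I : ℂ) - z‖ ^ m z :=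
    Finset.prod_pos fun z hz => pow_pos (hw₀ne z hz) _
  have hratio : ∏ z ∈ S, (‖(σ * y₀ * Complex.I : ℂ) - (starRingEnd ℂ) z‖ /
      ‖(σ * y₀ * Complex.I : ℂ) - z‖) ^ m z
      = (∏ z ∈ S, ‖(σ * y₀ * Complex.I : ℂ) - (starRingEnd ℂ) z‖ ^ m z) /
        (∏ z ∈ S, ‖(σ * y₀ * Complex.I : ℂ) - z‖ ^ m z) := by
    rw [← Finset.prod_div_distrib]
    exact Finset.prod_congr rfl fun z _ => div_pow _ _ _
  rw [hratio, mul_div_assoc', div_le_iff₀ hPpos, hnorm_eq]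
  exact mul_le_mul_of_nonneg_right hΦw₀ hPpos.le

lemma elem_core {a u y₀ N A B : ℝ} (hu : 0 < u) (h1 : 1 ≤ y₀) (h2 : y₀ ≤ 2)
    (hN : N = a ^ 2 + u ^ 2) (hN1 : 1 ≤ N) (hA : A = a ^ 2 + (y₀ - u) ^ 2)
    (hB : B = a ^ 2 + (y₀ + u) ^ 2) (hApos : 0 < A) :
    Real.exp (2 / 5 * (u / N)) ≤ B / A := by
  have hN0 : (0:ℝ) < N := lt_of_lt_of_le one_pos hN1
  have hBpos : 0 < B := by nlinarith [sq_nonneg a, hu, h1]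
  have hBA : B - A = 4 * y₀ * u := by rw [hA, hB]; ring
  have hB10 : B ≤ 10 * y₀ * N := by nlinarith [sq_nonneg (y₀ - u), hN1, h1, h2, hu, sq_nonneg a]
  have hlog : 1 - A / B ≤ Real.log (B / A) := by
    have hlg := Real.log_le_sub_one_of_pos (div_pos hApos hBpos)
    rw [Real.log_div hApos.ne' hBpos.ne'] at hlg
    rw [Real.log_div hBpos.ne' hApos.ne']
    linarith
  have h1AB : 1 - A / B = 4 * y₀ * u / B := by
    rw [eq_div_iff hBpos.ne']
    field_simp
    linarith [hBA]
  have hfrac : 2 / 5 * (u / N) ≤ 4 * y₀ * u / B := by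
    have hl : 2 / 5 * (u / N) = (2 * u) / (5 * N) := by ring
    rw [hl, div_le_div_iff₀ (by positivity) hBpos]
    nlinarith [mul_le_mul_of_nonneg_left hB10 hu.le, hu, h1, hN0]
  have hfin : 2 / 5 * (u / N) ≤ Real.log (B / A) := by linarith
  calc Real.exp (2 / 5 * (u / N)) ≤ Real.exp (Real.log (B / A)) := Real.exp_le_exp.2 hfin
    _ = B / A := Real.exp_log (div_pos hBpos hApos)

lemma elem_ineq {σ y₀ : ℝ} (hσ : σ = 1 ∨ σ = -1) (h1 : 1 ≤ y₀) (h2 : y₀ ≤ 2) {z : ℂ}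
    (him : 0 < σ * z.im) (hz1 : 1 ≤ ‖z‖) (hne : (σ * y₀ * Complex.I : ℂ) ≠ z) :
    Real.exp (2 / 5 * (|z.im| / ‖z‖ ^ 2)) ≤
      (‖(σ * y₀ * Complex.I : ℂ) - (starRingEnd ℂ) z‖ /
        ‖(σ * y₀ * Complex.I : ℂ) - z‖) ^ 2 := by
  have hsq : ∀ u : ℂ, ‖u‖ ^ 2 = u.re ^ 2 + u.im ^ 2 := fun u => by
    rw [Complex.sq_norm, Complex.normSq_apply]; ring
  have hw₀re : ((σ : ℂ) * (y₀ : ℂ) * Complex.I).re = 0 := by simp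
  have hw₀im : ((σ : ℂ) * (y₀ : ℂ) * Complex.I).im = σ * y₀ := by simp
  have hA : ‖(σ * y₀ * Complex.I : ℂ) - z‖ ^ 2 = z.re ^ 2 + (σ * y₀ - z.im) ^ 2 := by
    rw [hsq]
    simp only [Complex.sub_re, Complex.sub_im, hw₀re, hw₀im]
    ring
  have hB : ‖(σ * y₀ * Complex.I : ℂ) - (starRingEnd ℂ) z‖ ^ 2
      = z.re ^ 2 + (σ * y₀ + z.im) ^ 2 := by
    rw [hsq]
    simp only [Complex.sub_re, Complex.sub_im, hw₀re, hw₀im, Complex.conj_re, Complex.conj_im]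
    ring
  have hApos : 0 < ‖(σ * y₀ * Complex.I : ℂ) - z‖ ^ 2 :=
    pow_pos (norm_pos_iff.2 (sub_ne_zero.2 hne)) 2
  have hN : ‖z‖ ^ 2 = z.re ^ 2 + z.im ^ 2 := hsq z
  have hN1 : 1 ≤ ‖z‖ ^ 2 := one_le_pow₀ hz1
  have hdiv : (‖(σ * y₀ * Complex.I : ℂ) - (starRingEnd ℂ) z‖ /
      ‖(σ * y₀ * Complex.I : ℂ) - z‖) ^ 2
      = ‖(σ * y₀ * Complex.I : ℂ) - (starRingEnd ℂ) z‖ ^ 2 /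
        ‖(σ * y₀ * Complex.I : ℂ) - z‖ ^ 2 := div_pow _ _ 2
  rw [hdiv]
  rcases hσ with rfl | rfl
  · have him' : 0 < z.im := by linarith [him]
    have habs : |z.im| = z.im := abs_of_pos him'
    rw [habs]
    refine elem_core (a := z.re) (N := ‖z‖ ^ 2)
      (A := ‖((1:ℝ) * y₀ * Complex.I : ℂ) - z‖ ^ 2)
      (B := ‖((1:ℝ) * y₀ * Complex.I : ℂ) - (starRingEnd ℂ) z‖ ^ 2)
      him' h1 h2 hN hN1 ?_ ?_ hApos
    · rw [hA]; ring
    · rw [hB]; ring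
  · have him' : 0 < -z.im := by linarith [him]
    have habs : |z.im| = -z.im := abs_of_neg (by linarith)
    rw [habs]
    refine elem_core (a := z.re) (N := ‖z‖ ^ 2)
      (A := ‖((-1:ℝ) * y₀ * Complex.I : ℂ) - z‖ ^ 2)
      (B := ‖((-1:ℝ) * y₀ * Complex.I : ℂ) - (starRingEnd ℂ) z‖ ^ 2)
      him' h1 h2 (by rw [hN]; ring) hN1 ?_ ?_ hApos
    · rw [hA]; ring
    · rw [hB]; ring

lemma sum_bound_halfplane {f : ℂ → ℂ} (hf : Differentiable ℂ f) {M : ℝ} (hM : 1 ≤ M)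
    {σ : ℝ} (hσ : σ = 1 ∨ σ = -1) (hb : ∀ z : ℂ, 0 ≤ σ * z.im → ‖f z‖ ≤ M)
    {y₀ : ℝ} (hy₀ : 1 ≤ y₀) (hy₀' : y₀ ≤ 2) (hfw : f (σ * y₀ * Complex.I) ≠ 0)
    (S : Finset ℂ) (hS : ∀ z ∈ S, 0 < σ * z.im ∧ 1 ≤ ‖z‖) (m : ℂ → ℕ)
    (hzero : ∀ z ∈ S, f z = 0)
    (hfac : ∀ z ∈ S, ∃ g : ℂ → ℂ, Differentiable ℂ g ∧ g z ≠ 0 ∧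
      ∀ w, f w = (w - z) ^ m z * g w) :
    ∑ z ∈ S, (m z : ℝ) * (|z.im| / ‖z‖ ^ 2) ≤
      5 * Real.log (M / ‖f (σ * y₀ * Complex.I)‖) := by
  have hw₀S : ∀ z ∈ S, (σ * y₀ * Complex.I : ℂ) ≠ z := by
    intro z hz heqz
    exact hfw (heqz ▸ hzero z hz)
  have hfw0 : 0 < ‖f (σ * y₀ * Complex.I)‖ := norm_pos_iff.2 hfw
  have hprod := halfplane_blaschke hf hM hσ hb hy₀ hfw S (fun z hz => (hS z hz).1) m hw₀S hfac
  set t := M / ‖f (σ * y₀ * Complex.I)‖ with htdef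
  have ht0 : 0 < t := div_pos (lt_of_lt_of_le one_pos hM) hfw0
  set r : ℂ → ℝ := fun z => ‖(σ * y₀ * Complex.I : ℂ) - (starRingEnd ℂ) z‖ /
    ‖(σ * y₀ * Complex.I : ℂ) - z‖ with hrdef
  have hr0 : ∀ z, 0 ≤ r z := fun z => div_nonneg (norm_nonneg _) (norm_nonneg _)
  have hP : ∏ z ∈ S, r z ^ m z ≤ t := by
    rw [htdef, le_div_iff₀ hfw0, mul_comm]
    exact hprod
  have hX : Real.exp (2 / 5 * ∑ z ∈ S, (m z : ℝ) * (|z.im| / ‖z‖ ^ 2))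
      ≤ (∏ z ∈ S, r z ^ m z) ^ 2 := by
    have h1 : Real.exp (2 / 5 * ∑ z ∈ S, (m z : ℝ) * (|z.im| / ‖z‖ ^ 2))
        = ∏ z ∈ S, Real.exp (2 / 5 * (|z.im| / ‖z‖ ^ 2)) ^ m z := by
      rw [Finset.mul_sum, Real.exp_sum]
      refine Finset.prod_congr rfl fun z _ => ?_
      rw [← Real.exp_nat_mul]
      congr 1
      ring
    rw [h1]
    have h2 : ∀ z ∈ S, Real.exp (2 / 5 * (|z.im| / ‖z‖ ^ 2)) ^ m z ≤ (r z ^ 2) ^ m z := by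
      intro z hz
      exact pow_le_pow_left₀ (Real.exp_nonneg _)
        (elem_ineq hσ hy₀ hy₀' (hS z hz).1 (hS z hz).2 (hw₀S z hz)) _
    calc ∏ z ∈ S, Real.exp (2 / 5 * (|z.im| / ‖z‖ ^ 2)) ^ m z
        ≤ ∏ z ∈ S, (r z ^ 2) ^ m z :=
          Finset.prod_le_prod (fun z _ => pow_nonneg (Real.exp_nonneg _) _) h2
      _ = (∏ z ∈ S, r z ^ m z) ^ 2 := by
          rw [← Finset.prod_pow]
          exact Finset.prod_congr rfl fun z _ => by rw [← pow_mul, ← pow_mul, Nat.mul_comm]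
  have hXt : Real.exp (2 / 5 * ∑ z ∈ S, (m z : ℝ) * (|z.im| / ‖z‖ ^ 2)) ≤ t ^ 2 := by
    refine hX.trans ?_
    refine pow_le_pow_left₀ (Finset.prod_nonneg fun z _ => pow_nonneg (hr0 z) _) hP 2
  have hfin : 2 / 5 * ∑ z ∈ S, (m z : ℝ) * (|z.im| / ‖z‖ ^ 2) ≤ Real.log (t ^ 2) :=
    (Real.le_log_iff_exp_le (by positivity)).2 hXt
  rw [Real.log_pow] at hfin
  push_cast at hfin
  linarith

end Blaschke

theorem stmt6 (q : ℝ → ℂ) (γ : ℝ) (hq1 : Integrable q) (hq2 : MemLp q 2)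
    (hA : CondA q γ) (Λ : ℕ → ℂ) (hz : ∀ n, aFun q (Λ n) = 0)
    (hmult : ∀ z : ℂ, aFun q z = 0 → ZeroOrder (aFun q) z ({n : ℕ | Λ n = z}.ncard)) :
    Summable (fun n : ℕ => |(Λ n).im| / ‖Λ n‖ ^ 2) := by
  classical
  obtain ⟨hγ, hhull⟩ := hA
  have hsupp : tsupport q ⊆ Set.Icc 0 γ := hhull ▸ subset_convexHull ℝ _
  -- entirety of aFun q, from the factorization hypothesis
  obtain ⟨g₀, hg₀d, hg₀z, hfac₀⟩ := hmult (Λ 0) (hz 0)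
  have hfdiff : Differentiable ℂ (aFun q) := by
    have hfeq : aFun q = fun w => (w - Λ 0) ^ ({n : ℕ | Λ n = Λ 0}.ncard) * g₀ w :=
      funext hfac₀
    rw [hfeq]
    exact Differentiable.mul ((differentiable_id.sub_const _).pow _) hg₀d
  have hfne : ∃ w, aFun q w ≠ 0 := by
    obtain ⟨δ, hδ0, hδ⟩ := Metric.eventually_nhds_iff.1
      (hg₀d.continuous.continuousAt.eventually_ne hg₀z)
    refine ⟨Λ 0 + (δ / 2 : ℝ), ?_⟩
    rw [hfac₀]
    have hδconj : ((δ / 2 : ℝ) : ℂ) ≠ 0 := by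
      simp only [ne_eq, Complex.ofReal_eq_zero]
      linarith
    refine mul_ne_zero (pow_ne_zero _ (by simpa using hδconj)) ?_
    refine hδ ?_
    rw [Complex.dist_eq]
    simp only [add_sub_cancel_left]
    rw [Complex.norm_real, Real.norm_eq_abs, abs_of_pos (by linarith)]
    linarith
  -- bounds on the two half-planes
  obtain ⟨M, hM1, hMb⟩ := aFun_bound hq1 hγ hsupp
  have hbup : ∀ z : ℂ, 0 ≤ (1:ℝ) * z.im → ‖aFun q z‖ ≤ M := by
    intro z hz'
    have h := hMb z
    have hmax : max 0 (-z.im) = 0 := max_eq_left (by linarith [hz'])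
    rw [hmax] at h
    simpa using h
  set E : ℂ → ℂ := fun w => Complex.exp (-(2 * Complex.I * (γ:ℂ) * w)) with hEdef
  have hEdiff : Differentiable ℂ E := by
    apply Differentiable.cexp
    apply Differentiable.neg
    exact (differentiable_const _).mul differentiable_id
  have hEne : ∀ w, E w ≠ 0 := fun w => Complex.exp_ne_zero _
  have hEnorm : ∀ w : ℂ, ‖E w‖ = Real.exp (2 * γ * w.im) := by
    intro w
    rw [hEdef]
    rw [Complex.norm_exp]
    congr 1
    simp only [Complex.neg_re, Complex.mul_re, Complex.mul_im, Complex.I_re, Complex.I_im,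
      Complex.ofReal_re, Complex.ofReal_im, Complex.re_ofNat, Complex.im_ofNat]
    ring
  set F : ℂ → ℂ := fun w => aFun q w * E w with hFdef
  have hFdiff : Differentiable ℂ F := hfdiff.mul hEdiff
  have hbdn : ∀ z : ℂ, 0 ≤ (-1:ℝ) * z.im → ‖F z‖ ≤ M := by
    intro z hz'
    have him : z.im ≤ 0 := by linarith [hz']
    have h := hMb z
    have hmax : max 0 (-z.im) = -z.im := max_eq_right (by linarith)
    rw [hmax] at h
    rw [hFdef]
    show ‖aFun q z * E z‖ ≤ M
    rw [norm_mul, hEnorm]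
    calc ‖aFun q z‖ * Real.exp (2 * γ * z.im)
        ≤ (M * Real.exp (2 * γ * -z.im)) * Real.exp (2 * γ * z.im) := by
          exact mul_le_mul_of_nonneg_right h (Real.exp_nonneg _)
      _ = M := by
          rw [mul_assoc, ← Real.exp_add]
          have : 2 * γ * -z.im + 2 * γ * z.im = 0 := by ring
          rw [this, Real.exp_zero, mul_one]
  have hFne : ∃ w, F w ≠ 0 := by
    obtain ⟨w, hw⟩ := hfne
    exact ⟨w, mul_ne_zero hw (hEne w)⟩
  -- good evaluation points
  obtain ⟨y₁, hy₁1, hy₁2, hfy₁⟩ := exists_good_point hfdiff hfne 1 (Or.inl rfl)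
  obtain ⟨y₂, hy₂1, hy₂2, hFy₂⟩ := exists_good_point hFdiff hFne (-1) (Or.inr rfl)
  -- finite set of small zeros
  have hZfin : {z2 | z2 ∈ Metric.closedBall (0:ℂ) 1 ∧ aFun q z2 = 0}.Finite :=
    zeros_finite hfdiff hfne (isCompact_closedBall 0 1)
  -- weights
  set w : ℂ → ℝ := fun z2 => (({n : ℕ | Λ n = z2}.ncard : ℝ)) * (|z2.im| / ‖z2‖ ^ 2) with hwdef
  have hw0 : ∀ z2, 0 ≤ w z2 := fun z2 =>
    mul_nonneg (Nat.cast_nonneg _) (div_nonneg (abs_nonneg _) (by positivity))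
  set Csmall := ∑ z2 ∈ hZfin.toFinset, w z2 with hCsmall
  set Cup := 5 * Real.log (M / ‖aFun q ((1:ℝ) * y₁ * Complex.I)‖) with hCup
  set Cdn := 5 * Real.log (M / ‖F ((-1:ℝ) * y₂ * Complex.I)‖) with hCdn
  -- fibers of zeros are finite
  have hfib : ∀ z2 : ℂ, aFun q z2 = 0 → {n : ℕ | Λ n = z2}.Finite := by
    intro z2 hz2
    by_contra hinf
    obtain ⟨g, hgd, hgz, hfeq⟩ := hmult z2 hz2
    have h0 : {n : ℕ | Λ n = z2}.ncard = 0 := Set.Infinite.ncard hinf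
    have h1 := hfeq z2
    rw [h0, pow_zero, one_mul] at h1
    exact hgz (h1 ▸ hz2)
  refine summable_of_sum_range_le
    (c := Csmall + Cup + Cdn)
    (fun n => div_nonneg (abs_nonneg _) (by positivity)) ?_
  intro nN
  set A := Finset.range nN with hAdef
  set B := A.image Λ with hBdef
  have hBzero : ∀ z2 ∈ B, aFun q z2 = 0 := by
    intro z2 hz2
    obtain ⟨n, -, rfl⟩ := Finset.mem_image.1 hz2
    exact hz n
  -- regrouping
  have hgroup : ∑ n ∈ A, |(Λ n).im| / ‖Λ n‖ ^ 2 ≤ ∑ z2 ∈ B, w z2 := by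
    rw [← Finset.sum_fiberwise_of_maps_to (fun n hn => Finset.mem_image_of_mem Λ hn)
      (fun n => |(Λ n).im| / ‖Λ n‖ ^ 2)]
    refine Finset.sum_le_sum fun z2 hz2 => ?_
    have hinner : ∑ n ∈ A.filter (fun n => Λ n = z2), (|(Λ n).im| / ‖Λ n‖ ^ 2)
        = ((A.filter (fun n => Λ n = z2)).card : ℝ) * (|z2.im| / ‖z2‖ ^ 2) := by
      rw [Finset.sum_congr rfl (fun n hn => by
        rw [(Finset.mem_filter.1 hn).2]), Finset.sum_const, nsmul_eq_mul]
    rw [hinner, hwdef]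
    refine mul_le_mul_of_nonneg_right ?_ (div_nonneg (abs_nonneg _) (by positivity))
    have hz2zero : aFun q z2 = 0 := hBzero z2 hz2
    have hsubfib : ((A.filter (fun n => Λ n = z2) : Finset ℕ) : Set ℕ) ⊆ {n : ℕ | Λ n = z2} := by
      intro n hn
      exact (Finset.mem_filter.1 hn).2
    have hcard := Set.ncard_le_ncard hsubfib (hfib z2 hz2zero)
    rw [Set.ncard_coe_finset] at hcard
    exact_mod_cast hcard
  -- split the zero set
  set B1 := B.filter (fun z2 => ‖z2‖ < 1) with hB1
  set B2 := B.filter (fun z2 => ¬ ‖z2‖ < 1) with hB2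
  set B2a := B2.filter (fun z2 => 0 < z2.im) with hB2a
  set B2b := B2.filter (fun z2 => ¬ 0 < z2.im) with hB2b
  set B2b1 := B2b.filter (fun z2 => z2.im < 0) with hB2b1
  set B2b2 := B2b.filter (fun z2 => ¬ z2.im < 0) with hB2b2
  have hsum_split : ∑ z2 ∈ B, w z2
      = ∑ z2 ∈ B1, w z2 + (∑ z2 ∈ B2a, w z2 + (∑ z2 ∈ B2b1, w z2 + ∑ z2 ∈ B2b2, w z2)) := by
    rw [hB2b1, hB2b2, Finset.sum_filter_add_sum_filter_not B2b]
    rw [hB2a, hB2b, Finset.sum_filter_add_sum_filter_not B2]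
    rw [hB1, hB2, Finset.sum_filter_add_sum_filter_not B]
  -- small part
  have hbound1 : ∑ z2 ∈ B1, w z2 ≤ Csmall := by
    refine Finset.sum_le_sum_of_subset_of_nonneg ?_ (fun z2 _ _ => hw0 z2)
    intro z2 hz2
    rw [Set.Finite.mem_toFinset]
    have hmem := Finset.mem_filter.1 hz2
    refine ⟨?_, hBzero z2 hmem.1⟩
    rw [Metric.mem_closedBall, dist_zero_right]
    exact hmem.2.le
  -- upper half-plane part
  have hbound2 : ∑ z2 ∈ B2a, w z2 ≤ Cup := by
    rw [hCup]
    refine sum_bound_halfplane hfdiff hM1 (Or.inl rfl) hbup hy₁1 hy₁2 hfy₁ B2a ?_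
      (fun z2 => {n : ℕ | Λ n = z2}.ncard) ?_ ?_
    · intro z2 hz2
      have h1 := Finset.mem_filter.1 hz2
      have h2 := Finset.mem_filter.1 h1.1
      exact ⟨by rw [one_mul]; exact h1.2, not_lt.1 h2.2⟩
    · intro z2 hz2
      exact hBzero z2 (Finset.mem_filter.1 (Finset.mem_filter.1 hz2).1).1
    · intro z2 hz2
      exact hmult z2 (hBzero z2 (Finset.mem_filter.1 (Finset.mem_filter.1 hz2).1).1)
  -- lower half-plane part
  have hbound3 : ∑ z2 ∈ B2b1, w z2 ≤ Cdn := by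
    rw [hCdn]
    refine sum_bound_halfplane hFdiff hM1 (Or.inr rfl) hbdn hy₂1 hy₂2 hFy₂ B2b1 ?_
      (fun z2 => {n : ℕ | Λ n = z2}.ncard) ?_ ?_
    · intro z2 hz2
      have h1 := Finset.mem_filter.1 hz2
      have h2 := Finset.mem_filter.1 h1.1
      have h3 := Finset.mem_filter.1 h2.1
      refine ⟨?_, not_lt.1 h3.2⟩
      have : z2.im < 0 := h1.2
      nlinarith
    · intro z2 hz2
      have hmem : z2 ∈ B :=
        (Finset.mem_filter.1 (Finset.mem_filter.1 (Finset.mem_filter.1 hz2).1).1).1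
      show aFun q z2 * E z2 = 0
      rw [hBzero z2 hmem, zero_mul]
    · intro z2 hz2
      have hmem : z2 ∈ B :=
        (Finset.mem_filter.1 (Finset.mem_filter.1 (Finset.mem_filter.1 hz2).1).1).1
      obtain ⟨g, hgd, hgz, hfeq⟩ := hmult z2 (hBzero z2 hmem)
      refine ⟨fun w => g w * E w, hgd.mul hEdiff, mul_ne_zero hgz (hEne z2), fun w2 => ?_⟩
      show aFun q w2 * E w2 = _
      rw [hfeq w2]
      ring
  -- degenerate part (real zeros)
  have hbound4 : ∑ z2 ∈ B2b2, w z2 = 0 := by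
    refine Finset.sum_eq_zero fun z2 hz2 => ?_
    have h1 := Finset.mem_filter.1 hz2
    have h2 := Finset.mem_filter.1 h1.1
    have him : z2.im = 0 := le_antisymm (not_lt.1 h2.2) (not_lt.1 h1.2)
    rw [hwdef]
    show (({n : ℕ | Λ n = z2}.ncard : ℝ)) * (|z2.im| / ‖z2‖ ^ 2) = 0
    rw [him, abs_zero, zero_div, mul_zero]
  calc ∑ n ∈ A, |(Λ n).im| / ‖Λ n‖ ^ 2 ≤ ∑ z2 ∈ B, w z2 := hgroup
    _ = ∑ z2 ∈ B1, w z2 + (∑ z2 ∈ B2a, w z2 + (∑ z2 ∈ B2b1, w z2 + ∑ z2 ∈ B2b2, w z2)) :=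
        hsum_split
    _ ≤ Csmall + Cup + Cdn := by
        have h4 := hbound4
        linarith [hbound1, hbound2, hbound3]
end

section
/- Let γ > 0, let f : ℂ → ℂ be an entire function of exponential type (i.e. there exist constants C, A > 0 with |f(z)| ≤ C·e^{A|z|} for all z ∈ ℂ) such that limsup_{y→+∞} (log |f(−iy)|)/y ≤ 2γ. Let p ≥ 0 be an integer, let G_p(z) = 1 + Σ_{n=1}^p d_n z^{−n} with d_1, …, d_p ∈ ℂ, and assume C_p := sup_{x∈ℝ} |x^{p+1}(f(x) − G_p(x))| < ∞. Then every zero z₀ of f with Im z₀ ≤ 0 and z₀ ≠ 0 satisfies |G_p(z₀)| ≤ C_p · |z₀|^{−(p+1)} · e^{−2γ·Im z₀}. -/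
open MeasureTheory Set Filter

lemma pl_lower_half (h : ℂ → ℂ) (hdiff : Differentiable ℂ h) (Cp M B : ℝ)
    (hM : 0 ≤ M)
    (hgrow : ∀ z : ℂ, ‖h z‖ ≤ M * Real.exp (B * ‖z‖))
    (hray : ∀ ε : ℝ, 0 < ε → ∀ᶠ x : ℝ in atTop, ‖h (-Complex.I * x)‖ ≤ Real.exp (ε * x))
    (hreal : ∀ x : ℝ, ‖h (x : ℂ)‖ ≤ Cp) :
    ∀ z : ℂ, z.im ≤ 0 → ‖h z‖ ≤ Cp := by
  intro z hz
  have key : ∀ ε : ℝ, 0 < ε → ‖h z‖ ≤ Cp * Real.exp (ε * (-z.im)) := by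
    intro ε hε
    set g : ℂ → ℂ := fun w => Complex.exp (-(ε : ℂ) * w) * h (-Complex.I * w) with hgdef
    have hgnorm : ∀ w : ℂ, ‖g w‖ = Real.exp (-ε * w.re) * ‖h (-Complex.I * w)‖ := by
      intro w
      rw [hgdef]
      simp only [norm_mul, Complex.norm_exp]
      congr 2
      simp [Complex.mul_re]
    have hb : ∀ w : ℂ, 0 ≤ w.re → ‖g w‖ ≤ Cp := by
      intro w hw
      refine PhragmenLindelof.right_half_plane_of_bounded_on_real ?_ ?_ ?_ ?_ hw
      · exact Differentiable.diffContOnCl (by fun_prop)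
      · refine ⟨1, one_lt_two, |B| + ε, ?_⟩
        rw [Asymptotics.isBigO_iff]
        refine ⟨M, ?_⟩
        rw [eventually_inf_principal]
        refine Eventually.of_forall fun w hw => ?_
        have hw' : (0:ℝ) < w.re := hw
        have h1 : ‖g w‖ ≤ M * Real.exp (B * ‖w‖) := by
          rw [hgnorm]
          calc Real.exp (-ε * w.re) * ‖h (-Complex.I * w)‖
              ≤ 1 * (M * Real.exp (B * ‖-Complex.I * w‖)) := by
                apply mul_le_mul _ (hgrow _) (norm_nonneg _) zero_le_one
                exact Real.exp_le_one_iff.2 (by nlinarith)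
            _ = M * Real.exp (B * ‖w‖) := by
                rw [one_mul]; congr 2; simp
        refine h1.trans ?_
        rw [Real.norm_eq_abs, Real.rpow_one, Real.abs_exp]
        have : B * ‖w‖ ≤ (|B| + ε) * ‖w‖ := by
          apply mul_le_mul_of_nonneg_right _ (norm_nonneg _)
          have := le_abs_self B; linarith
        exact mul_le_mul_of_nonneg_left (Real.exp_le_exp.2 this) hM
      · refine isBoundedUnder_of_eventually_le (a := 1) ?_
        filter_upwards [hray (ε/2) (by linarith), eventually_ge_atTop (0:ℝ)] with x hx hx0
        rw [hgnorm]
        simp only [Complex.ofReal_re]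
        calc Real.exp (-ε * x) * ‖h (-Complex.I * x)‖
            ≤ Real.exp (-ε * x) * Real.exp (ε/2 * x) :=
              mul_le_mul_of_nonneg_left hx (Real.exp_nonneg _)
          _ = Real.exp (-(ε/2) * x) := by rw [← Real.exp_add]; ring_nf
          _ ≤ 1 := Real.exp_le_one_iff.2 (by nlinarith)
      · intro y
        rw [hgnorm]
        have h1 : (-Complex.I * ((y:ℂ) * Complex.I)) = (y : ℂ) := by
          rw [mul_comm (y:ℂ) Complex.I, ← mul_assoc]
          simp [Complex.I_mul_I]
        rw [h1]
        simp only [Complex.mul_re, Complex.ofReal_re, Complex.I_re, Complex.ofReal_im,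
          Complex.I_im]
        norm_num
        exact hreal y
    have := hb (Complex.I * z) (by simp [Complex.mul_re]; linarith)
    rw [hgnorm] at this
    have h2 : (-Complex.I * (Complex.I * z)) = z := by
      rw [← mul_assoc]; simp [Complex.I_mul_I]
    rw [h2] at this
    simp only [Complex.mul_re, Complex.I_re, Complex.I_im] at this
    have h3 : Real.exp (-ε * (0 * z.re - 1 * z.im)) * ‖h z‖ ≤ Cp := by
      convert this using 3 <;> ring
    have h4 : (0:ℝ) < Real.exp (-ε * (0 * z.re - 1 * z.im)) := Real.exp_pos _
    calc ‖h z‖ = Real.exp (-ε * (0 * z.re - 1 * z.im)) * ‖h z‖ *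
          Real.exp (ε * (-z.im)) := by
          rw [mul_assoc, mul_comm (‖h z‖), ← mul_assoc, ← Real.exp_add]
          ring_nf
          rw [Real.exp_zero, one_mul]
      _ ≤ Cp * Real.exp (ε * (-z.im)) :=
          mul_le_mul_of_nonneg_right h3 (Real.exp_nonneg _)
  have hCp0 : 0 ≤ Cp := le_trans (norm_nonneg _) (hreal 0)
  have hlim : Tendsto (fun ε : ℝ => Cp * Real.exp (ε * (-z.im))) (nhdsWithin 0 (Set.Ioi 0))
      (nhds (Cp * Real.exp (0 * (-z.im)))) := by
    apply Tendsto.mono_left _ nhdsWithin_le_nhds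
    exact (Continuous.tendsto (by continuity) 0)
  rw [zero_mul, Real.exp_zero, mul_one] at hlim
  refine ge_of_tendsto hlim ?_
  filter_upwards [self_mem_nhdsWithin] with ε hε
  exact key ε hε

lemma ev_helper (m : ℕ) (c K : ℝ) (hc : 0 < c) :
    ∀ᶠ x : ℝ in atTop, K * (x ^ m * Real.exp (-(c * x))) ≤ 1/2 := by
  have hcomp : Tendsto (fun x : ℝ => c * x) atTop atTop :=
    tendsto_id.const_mul_atTop hc
  have h1 : Tendsto (fun x : ℝ => (K / c ^ m) *
      ((c*x) ^ m * Real.exp (-(c*x)))) atTop (nhds ((K / c ^ m) * 0)) :=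
    tendsto_const_nhds.mul ((Real.tendsto_pow_mul_exp_neg_atTop_nhds_zero m).comp hcomp)
  rw [mul_zero] at h1
  have heq : ∀ x : ℝ, (K / c ^ m) * ((c*x) ^ m * Real.exp (-(c*x)))
      = K * (x ^ m * Real.exp (-(c * x))) := by
    intro x
    have hcm : (c : ℝ) ^ m ≠ 0 := pow_ne_zero _ hc.ne'
    field_simp [mul_pow]
    ring
  simp_rw [heq] at h1
  exact (h1.eventually_le_const (by norm_num))

set_option maxHeartbeats 1000000 in
theorem stmt9 (γ : ℝ) (hγ : 0 < γ) (f : ℂ → ℂ) (hf : Differentiable ℂ f)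
    (C A : ℝ) (hC : 0 < C) (hA : 0 < A)
    (hgrowth : ∀ z : ℂ, ‖f z‖ ≤ C * Real.exp (A * ‖z‖))
    (htype : limsup (fun y : ℝ => Real.log ‖f (-Complex.I * (y : ℂ))‖ / y) atTop ≤ 2 * γ)
    (p : ℕ) (d : ℕ → ℂ) (Cp : ℝ)
    (hCp : ∀ x : ℝ,
      ‖(x : ℂ) ^ (p + 1) *
        (f x - (1 + ∑ n ∈ Finset.Icc 1 p, d n / (x : ℂ) ^ n))‖ ≤ Cp) :
    ∀ z₀ : ℂ, f z₀ = 0 → z₀.im ≤ 0 → z₀ ≠ 0 →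
      ‖1 + ∑ n ∈ Finset.Icc 1 p, d n / z₀ ^ n‖ ≤
        Cp / ‖z₀‖ ^ (p + 1) * Real.exp (-2 * γ * z₀.im) := by
  set G : ℂ → ℂ := fun z => 1 + ∑ n ∈ Finset.Icc 1 p, d n / z ^ n with hGdef
  set P : ℂ → ℂ := fun z => z ^ (p+1) + ∑ n ∈ Finset.Icc 1 p, d n * z ^ (p+1-n) with hPdef
  set h : ℂ → ℂ :=
    fun z => (z ^ (p+1) * f z - P z) * Complex.exp ((-(2*γ) : ℂ) * Complex.I * z) with hhdef
  set D : ℝ := 1 + ∑ n ∈ Finset.Icc 1 p, ‖d n‖ with hDdef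
  have hD1 : (1:ℝ) ≤ D := by
    rw [hDdef]
    have : (0:ℝ) ≤ ∑ n ∈ Finset.Icc 1 p, ‖d n‖ :=
      Finset.sum_nonneg fun n _ => norm_nonneg _
    linarith
  -- algebraic identity away from zero
  have hPG : ∀ z : ℂ, z ≠ 0 → z ^ (p+1) * G z = P z := by
    intro z hz
    rw [hGdef, hPdef]
    simp only
    rw [mul_add, mul_one, Finset.mul_sum]
    congr 1
    refine Finset.sum_congr rfl fun n hn => ?_
    rw [Finset.mem_Icc] at hn
    rw [pow_sub₀ z hz (by omega : n ≤ p+1), div_eq_mul_inv]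
    ring
  -- norm of h
  have hhnorm : ∀ z : ℂ, ‖h z‖ = ‖z ^ (p+1) * f z - P z‖ * Real.exp (2 * γ * z.im) := by
    intro z
    rw [hhdef]
    simp only [norm_mul]
    congr 1
    rw [Complex.norm_exp]
    congr 1
    simp [Complex.mul_re, Complex.mul_im]
  -- P bound
  have hPbound : ∀ (t : ℝ) (z : ℂ), 1 ≤ t → ‖z‖ ≤ t → ‖P z‖ ≤ D * t ^ (p+1) := by
    intro t z ht hzt
    have ht0 : (0:ℝ) ≤ t := by linarith
    have hterm : ∀ n ∈ Finset.Icc 1 p, ‖d n * z ^ (p+1-n)‖ ≤ ‖d n‖ * t ^ (p+1) := by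
      intro n hn
      rw [Finset.mem_Icc] at hn
      rw [norm_mul, norm_pow]
      refine mul_le_mul_of_nonneg_left ?_ (norm_nonneg _)
      calc ‖z‖ ^ (p+1-n) ≤ t ^ (p+1-n) := pow_le_pow_left₀ (norm_nonneg _) hzt _
        _ ≤ t ^ (p+1) := pow_le_pow_right₀ ht (by omega)
    rw [hPdef]
    simp only
    calc ‖z ^ (p+1) + ∑ n ∈ Finset.Icc 1 p, d n * z ^ (p+1-n)‖
        ≤ ‖z ^ (p+1)‖ + ‖∑ n ∈ Finset.Icc 1 p, d n * z ^ (p+1-n)‖ := norm_add_le _ _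
      _ ≤ t ^ (p+1) + ∑ n ∈ Finset.Icc 1 p, ‖d n‖ * t ^ (p+1) := by
          refine add_le_add ?_ ((norm_sum_le _ _).trans (Finset.sum_le_sum hterm))
          rw [norm_pow]
          exact pow_le_pow_left₀ (norm_nonneg _) hzt _
      _ = D * t ^ (p+1) := by rw [hDdef, ← Finset.sum_mul]; ring
  -- growth of h
  have hgrow : ∀ z : ℂ, ‖h z‖ ≤ (C + D) * Real.exp ((A + (p+1) + 2*γ) * ‖z‖) := by
    intro z
    have ht0 : (0:ℝ) ≤ ‖z‖ := norm_nonneg z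
    have hmax : max 1 ‖z‖ ≤ Real.exp ‖z‖ :=
      max_le (Real.one_le_exp ht0) (by linarith [Real.add_one_le_exp ‖z‖])
    have hmaxpow : (max 1 ‖z‖) ^ (p+1) ≤ Real.exp (((p:ℝ)+1) * ‖z‖) := by
      calc (max 1 ‖z‖) ^ (p+1) ≤ (Real.exp ‖z‖) ^ (p+1) :=
            pow_le_pow_left₀ (le_trans zero_le_one (le_max_left _ _)) hmax _
        _ = Real.exp (((p:ℝ)+1) * ‖z‖) := by
            rw [← Real.exp_nat_mul]
            push_cast
            ring_nf
    have hzpow : ‖z‖ ^ (p+1) ≤ Real.exp (((p:ℝ)+1) * ‖z‖) :=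
      le_trans (pow_le_pow_left₀ ht0 (le_max_right 1 ‖z‖) _) hmaxpow
    have hP : ‖P z‖ ≤ D * Real.exp (((p:ℝ)+1) * ‖z‖) :=
      le_trans (hPbound (max 1 ‖z‖) z (le_max_left _ _) (le_max_right _ _))
        (mul_le_mul_of_nonneg_left hmaxpow (by linarith))
    have him : z.im ≤ ‖z‖ := le_trans (le_abs_self _)
      (by exact Complex.abs_im_le_norm z)
    have h1 : ‖z ^ (p+1) * f z - P z‖ ≤
        Real.exp (((p:ℝ)+1) * ‖z‖) * (C * Real.exp (A * ‖z‖)) +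
        D * Real.exp (((p:ℝ)+1) * ‖z‖) := by
      calc ‖z ^ (p+1) * f z - P z‖ ≤ ‖z ^ (p+1) * f z‖ + ‖P z‖ := norm_sub_le _ _
        _ = ‖z‖ ^ (p+1) * ‖f z‖ + ‖P z‖ := by rw [norm_mul, norm_pow]
        _ ≤ Real.exp (((p:ℝ)+1) * ‖z‖) * (C * Real.exp (A * ‖z‖)) +
            D * Real.exp (((p:ℝ)+1) * ‖z‖) := by
            exact add_le_add (mul_le_mul hzpow (hgrowth z) (norm_nonneg _)
              (Real.exp_nonneg _)) hP
    rw [hhnorm]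
    have expmul : ∀ a b c : ℝ, Real.exp a * Real.exp b * Real.exp c = Real.exp (a+b+c) := by
      intro a b c; rw [Real.exp_add, Real.exp_add]
    have key1 : Real.exp (((p:ℝ)+1) * ‖z‖) * (C * Real.exp (A * ‖z‖)) * Real.exp (2*γ*‖z‖)
        = C * Real.exp ((A + ((p:ℝ)+1) + 2*γ) * ‖z‖) := by
      calc Real.exp (((p:ℝ)+1) * ‖z‖) * (C * Real.exp (A * ‖z‖)) * Real.exp (2*γ*‖z‖)
          = C * (Real.exp (((p:ℝ)+1) * ‖z‖) * Real.exp (A * ‖z‖) * Real.exp (2*γ*‖z‖)) := by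
            ring
        _ = C * Real.exp (((p:ℝ)+1) * ‖z‖ + A * ‖z‖ + 2*γ*‖z‖) := by rw [expmul]
        _ = C * Real.exp ((A + ((p:ℝ)+1) + 2*γ) * ‖z‖) := by
            congr 1
            ring
    have key2 : D * Real.exp (((p:ℝ)+1) * ‖z‖) * Real.exp (2*γ*‖z‖)
        ≤ D * Real.exp ((A + ((p:ℝ)+1) + 2*γ) * ‖z‖) := by
      calc D * Real.exp (((p:ℝ)+1) * ‖z‖) * Real.exp (2*γ*‖z‖)
          = D * Real.exp (((p:ℝ)+1) * ‖z‖ + 2*γ*‖z‖) := by rw [mul_assoc, ← Real.exp_add]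
        _ ≤ D * Real.exp ((A + ((p:ℝ)+1) + 2*γ) * ‖z‖) := by
            refine mul_le_mul_of_nonneg_left (Real.exp_le_exp.2 ?_) (by linarith)
            have h' : (A + ((p:ℝ)+1) + 2*γ) * ‖z‖ =
                (((p:ℝ)+1) * ‖z‖ + 2*γ*‖z‖) + A * ‖z‖ := by ring
            rw [h']
            linarith [mul_nonneg hA.le ht0]
    have himle : 2 * γ * z.im ≤ 2 * γ * ‖z‖ :=
      mul_le_mul_of_nonneg_left him (by linarith)
    calc ‖z ^ (p+1) * f z - P z‖ * Real.exp (2 * γ * z.im)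
        ≤ (Real.exp (((p:ℝ)+1) * ‖z‖) * (C * Real.exp (A * ‖z‖)) +
            D * Real.exp (((p:ℝ)+1) * ‖z‖)) * Real.exp (2 * γ * ‖z‖) := by
          refine mul_le_mul h1 (Real.exp_le_exp.2 himle) (Real.exp_nonneg _) (by positivity)
      _ ≤ (C + D) * Real.exp ((A + (p+1) + 2*γ) * ‖z‖) := by
          rw [add_mul, key1]
          linarith [key2]
  -- ray estimate
  have hray : ∀ ε : ℝ, 0 < ε → ∀ᶠ x : ℝ in atTop, ‖h (-Complex.I * x)‖ ≤ Real.exp (ε * x) := by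
    intro ε hε
    have hbdd : IsBoundedUnder (· ≤ ·) atTop
        (fun y : ℝ => Real.log ‖f (-Complex.I * y)‖ / y) := by
      refine ⟨|Real.log C| + A, ?_⟩
      rw [eventually_map]
      filter_upwards [eventually_ge_atTop (1:ℝ)] with y hy
      have hy0 : (0:ℝ) < y := by linarith
      have hnorm : ‖(-Complex.I * (y:ℂ))‖ = y := by
        rw [norm_mul, norm_neg, Complex.norm_I, one_mul, Complex.norm_real,
          Real.norm_eq_abs, abs_of_nonneg hy0.le]
      rcases eq_or_lt_of_le (norm_nonneg (f (-Complex.I * y))) with h0 | h0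
      · rw [← h0, Real.log_zero, zero_div]
        positivity
      · have h1 : Real.log ‖f (-Complex.I * y)‖ ≤ Real.log (C * Real.exp (A * y)) := by
          refine Real.log_le_log h0 ?_
          have := hgrowth (-Complex.I * y)
          rwa [hnorm] at this
        rw [Real.log_mul hC.ne' (Real.exp_ne_zero _), Real.log_exp] at h1
        rw [div_le_iff₀ hy0]
        have h2 : Real.log C ≤ |Real.log C| * y :=
          le_trans (le_abs_self _) (le_mul_of_one_le_right (abs_nonneg _) hy)
        nlinarith
    have hev1 : ∀ᶠ y : ℝ in atTop, Real.log ‖f (-Complex.I * (y:ℂ))‖ / y < 2*γ + ε/2 := by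
      have hlt : (2*γ : ℝ) < 2*γ + ε/2 := by linarith
      exact eventually_lt_of_limsup_lt (htype.trans_lt hlt) hbdd
    have hev2 := ev_helper (p+1) (ε/2) 1 (by linarith)
    have hev3 := ev_helper (p+1) (2*γ) D (by linarith)
    filter_upwards [hev1, hev2, hev3, eventually_ge_atTop (1:ℝ)] with x h1 h2 h3 hx1
    have hx0 : (0:ℝ) < x := by linarith
    have hnorm : ‖(-Complex.I * (x:ℂ))‖ = x := by
      rw [norm_mul, norm_neg, Complex.norm_I, one_mul, Complex.norm_real,
        Real.norm_eq_abs, abs_of_nonneg hx0.le]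
    have hfb : ‖f (-Complex.I * x)‖ ≤ Real.exp ((2*γ + ε/2) * x) := by
      rcases eq_or_lt_of_le (norm_nonneg (f (-Complex.I * x))) with h0 | h0
      · rw [← h0]; positivity
      · have hlt := (div_lt_iff₀ hx0).1 h1
        calc ‖f (-Complex.I * x)‖
            = Real.exp (Real.log ‖f (-Complex.I * x)‖) := (Real.exp_log h0).symm
          _ ≤ Real.exp ((2*γ + ε/2) * x) := Real.exp_le_exp.2 (by linarith)
    have him2 : (-Complex.I * (x:ℂ)).im = -x := by simp
    have hP := hPbound x (-Complex.I * x) hx1 (le_of_eq hnorm)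
    -- convert h2 : 1 * (x^(p+1) * exp(-(ε/2*x))) ≤ 1/2
    rw [one_mul] at h2
    have e2 : x ^ (p+1) ≤ 1/2 * Real.exp (ε/2 * x) := by
      have hpos := Real.exp_pos (ε/2 * x)
      rw [Real.exp_neg] at h2
      calc x ^ (p+1) = x ^ (p+1) * (Real.exp (ε/2 * x))⁻¹ * Real.exp (ε/2 * x) := by
            field_simp
        _ ≤ 1/2 * Real.exp (ε/2 * x) := mul_le_mul_of_nonneg_right h2 hpos.le
    have e3 : D * x ^ (p+1) ≤ 1/2 * Real.exp (2*γ * x) := by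
      have hpos := Real.exp_pos (2*γ * x)
      rw [Real.exp_neg] at h3
      calc D * x ^ (p+1) = D * (x ^ (p+1) * (Real.exp (2*γ * x))⁻¹) *
            Real.exp (2*γ * x) := by field_simp
        _ ≤ 1/2 * Real.exp (2*γ * x) := mul_le_mul_of_nonneg_right h3 hpos.le
    rw [hhnorm, him2]
    have step1 : ‖(-Complex.I * (x:ℂ)) ^ (p+1) * f (-Complex.I * x) - P (-Complex.I * x)‖
        ≤ x ^ (p+1) * Real.exp ((2*γ + ε/2) * x) + D * x ^ (p+1) := by
      calc ‖(-Complex.I * (x:ℂ)) ^ (p+1) * f (-Complex.I * x) - P (-Complex.I * x)‖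
          ≤ ‖(-Complex.I * (x:ℂ)) ^ (p+1) * f (-Complex.I * x)‖ + ‖P (-Complex.I * x)‖ :=
            norm_sub_le _ _
        _ = x ^ (p+1) * ‖f (-Complex.I * x)‖ + ‖P (-Complex.I * x)‖ := by
            rw [norm_mul, norm_pow, hnorm]
        _ ≤ x ^ (p+1) * Real.exp ((2*γ + ε/2) * x) + D * x ^ (p+1) := by
            refine add_le_add (mul_le_mul_of_nonneg_left hfb (by positivity)) hP
    have q1 : Real.exp ((2*γ + ε/2) * x) * Real.exp (2 * γ * (-x)) = Real.exp (ε/2 * x) := by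
      rw [← Real.exp_add]
      congr 1
      ring
    have q3 : Real.exp (2*γ * x) * Real.exp (2 * γ * (-x)) = 1 := by
      rw [← Real.exp_add]
      rw [show 2*γ*x + 2*γ*(-x) = 0 from by ring, Real.exp_zero]
    have q2 : Real.exp (ε/2 * x) * Real.exp (ε/2 * x) = Real.exp (ε * x) := by
      rw [← Real.exp_add]
      congr 1
      ring
    have hE := Real.exp_pos (2 * γ * (-x))
    calc ‖(-Complex.I * (x:ℂ)) ^ (p+1) * f (-Complex.I * x) - P (-Complex.I * x)‖ *
          Real.exp (2 * γ * (-x))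
        ≤ (x ^ (p+1) * Real.exp ((2*γ + ε/2) * x) + D * x ^ (p+1)) *
          Real.exp (2 * γ * (-x)) := mul_le_mul_of_nonneg_right step1 hE.le
      _ = x ^ (p+1) * Real.exp (ε/2 * x) +
          (D * x ^ (p+1)) * Real.exp (2 * γ * (-x)) := by
          rw [add_mul, mul_assoc, q1]
      _ ≤ (1/2 * Real.exp (ε/2 * x)) * Real.exp (ε/2 * x) +
          (1/2 * Real.exp (2*γ * x)) * Real.exp (2 * γ * (-x)) := by
          refine add_le_add (mul_le_mul_of_nonneg_right e2 (Real.exp_nonneg _))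
            (mul_le_mul_of_nonneg_right e3 hE.le)
      _ = 1/2 * Real.exp (ε * x) + 1/2 := by
          rw [mul_assoc, q2, mul_assoc, q3, mul_one]
      _ ≤ Real.exp (ε * x) := by
          have : (1:ℝ) ≤ Real.exp (ε * x) := Real.one_le_exp (by positivity)
          linarith
  -- real-line bound
  have hCp0 : 0 ≤ Cp := by
    have := hCp 0
    simpa using this
  have hreal : ∀ x : ℝ, ‖h (x : ℂ)‖ ≤ Cp := by
    intro x
    rcases eq_or_ne x 0 with rfl | hx
    · have hP0 : P 0 = 0 := by
        rw [hPdef]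
        simp only
        rw [zero_pow (Nat.succ_ne_zero p), Finset.sum_eq_zero, add_zero]
        intro n hn
        rw [Finset.mem_Icc] at hn
        rw [zero_pow (by omega : p + 1 - n ≠ 0), mul_zero]
      rw [hhdef]
      simp only [Complex.ofReal_zero, hP0]
      rw [zero_pow (Nat.succ_ne_zero p), zero_mul, sub_zero, zero_mul, norm_zero]
      exact hCp0
    · have hxc : (x:ℂ) ≠ 0 := Complex.ofReal_ne_zero.2 hx
      rw [hhnorm, Complex.ofReal_im, mul_zero, Real.exp_zero, mul_one,
        ← hPG _ hxc, ← mul_sub]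
      exact hCp x
  have hdiff : Differentiable ℂ h := by
    have hPdiff : Differentiable ℂ P := by
      rw [hPdef]
      refine (differentiable_pow (p+1)).add ?_
      refine Differentiable.fun_sum fun n _ => ?_
      exact (differentiable_pow (p+1-n)).const_mul (d n)
    rw [hhdef]
    refine Differentiable.mul (((differentiable_pow (p+1)).mul hf).sub hPdiff) ?_
    exact (differentiable_id.const_mul (-(2*(γ:ℂ)) * Complex.I)).cexp
  have key := pl_lower_half h hdiff Cp (C + D) (A + (p+1) + 2*γ)
    (by linarith) hgrow hray hreal
  intro z₀ hfz hzim hzne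
  have hk := key z₀ hzim
  rw [hhnorm, hfz, mul_zero, zero_sub, norm_neg, ← hPG z₀ hzne, norm_mul, norm_pow] at hk
  have hpos : (0:ℝ) < ‖z₀‖ ^ (p+1) := pow_pos (norm_pos_iff.2 hzne) _
  have hexp : (0:ℝ) < Real.exp (2 * γ * z₀.im) := Real.exp_pos _
  rw [div_mul_eq_mul_div, le_div_iff₀ hpos]
  calc ‖G z₀‖ * ‖z₀‖ ^ (p+1)
      = (‖z₀‖ ^ (p+1) * ‖G z₀‖ * Real.exp (2 * γ * z₀.im)) *
          Real.exp (-2 * γ * z₀.im) := by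
        rw [mul_assoc (‖z₀‖ ^ (p+1) * ‖G z₀‖), ← Real.exp_add]
        have : 2 * γ * z₀.im + -2 * γ * z₀.im = 0 := by ring
        rw [this, Real.exp_zero, mul_one]
        ring
    _ ≤ Cp * Real.exp (-2 * γ * z₀.im) :=
        mul_le_mul_of_nonneg_right hk (Real.exp_nonneg _)
end

section
/- Let γ > 0 and let f : ℂ → ℂ be an entire function of exponential type (|f(z)| ≤ C·e^{A|z|} for some constants C, A > 0) with limsup_{y→+∞} (log |f(−iy)|)/y ≤ 2γ. Assume C₀ := sup_{x∈ℝ} |x·(f(x) − 1)| < ∞. Then every zero z₀ of f with Im z₀ ≤ 0 satisfies |z₀| ≤ C₀ · e^{−2γ·Im z₀}. -/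
open MeasureTheory Set Filter
open Topology

theorem stmt10 (γ : ℝ) (hγ : 0 < γ) (f : ℂ → ℂ) (hf : Differentiable ℂ f)
    (C A : ℝ) (hC : 0 < C) (hA : 0 < A)
    (hgrowth : ∀ z : ℂ, ‖f z‖ ≤ C * Real.exp (A * ‖z‖))
    (htype : limsup (fun y : ℝ => Real.log ‖f (-Complex.I * (y : ℂ))‖ / y) atTop ≤ 2 * γ)
    (C₀ : ℝ) (hC₀ : ∀ x : ℝ, ‖(x : ℂ) * (f x - 1)‖ ≤ C₀) :
    ∀ z₀ : ℂ, f z₀ = 0 → z₀.im ≤ 0 → ‖z₀‖ ≤ C₀ * Real.exp (-2 * γ * z₀.im) := by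
  intro z₀ hz₀ himz
  have key : ∀ ε : ℝ, 0 < ε → ‖z₀‖ ≤ C₀ * Real.exp (-(2 * γ + ε) * z₀.im) := by
    intro ε hε
    set a : ℝ := 2 * γ + ε with ha
    have ha0 : 0 < a := by positivity
    set F : ℂ → ℂ := fun w => Complex.exp (-(a : ℂ) * w) *
      ((-Complex.I * w) * (f (-Complex.I * w) - 1)) with hF
    have hdF : Differentiable ℂ F := by
      apply Differentiable.mul
      · exact (differentiable_id.const_mul _).cexp
      · exact (differentiable_id.const_mul _).mul
          ((hf.comp (differentiable_id.const_mul _)).sub_const 1)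
    have hnorm : ∀ w : ℂ, ‖F w‖
        = Real.exp (-a * w.re) * (‖w‖ * ‖f (-Complex.I * w) - 1‖) := by
      intro w
      simp only [hF, norm_mul, Complex.norm_exp, map_mul, norm_neg, Complex.norm_I,
        one_mul]
      congr 2
      simp [Complex.mul_re]
    -- boundedness of the limsup quantity
    have hbdd : IsBoundedUnder (· ≤ ·) atTop
        (fun y : ℝ => Real.log ‖f (-Complex.I * (y : ℂ))‖ / y) := by
      refine ⟨|Real.log C| + A, eventually_map.2 ?_⟩
      filter_upwards [eventually_ge_atTop 1] with y hy
      have hy0 : (0:ℝ) < y := lt_of_lt_of_le one_pos hy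
      have hnw : ‖(-Complex.I * (y:ℂ))‖ = |y| := by simp
      have h1 : Real.log ‖f (-Complex.I * (y:ℂ))‖ ≤ |Real.log C| + A * y := by
        rcases eq_or_lt_of_le (norm_nonneg (f (-Complex.I * (y:ℂ)))) with h0 | h0
        · rw [← h0, Real.log_zero]; positivity
        · have := Real.log_le_log h0 (hgrowth (-Complex.I * (y:ℂ)))
          rw [Real.log_mul (ne_of_gt hC) (Real.exp_ne_zero _), Real.log_exp, hnw,
            abs_of_pos hy0] at this
          have := le_abs_self (Real.log C)
          linarith
      calc Real.log ‖f (-Complex.I * (y:ℂ))‖ / y ≤ (|Real.log C| + A * y) / y := by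
            gcongr
        _ = |Real.log C| / y + A := by field_simp
        _ ≤ |Real.log C| + A := by
            have : |Real.log C| / y ≤ |Real.log C| := by
              apply div_le_self (abs_nonneg _) hy
            linarith
    have hev : ∀ᶠ y : ℝ in atTop, ‖f (-Complex.I * (y:ℂ))‖ ≤ Real.exp ((2*γ + ε/2) * y) := by
      have hlt : limsup (fun y : ℝ => Real.log ‖f (-Complex.I * (y : ℂ))‖ / y) atTop
          < 2*γ + ε/2 := lt_of_le_of_lt htype (by linarith)
      filter_upwards [eventually_lt_of_limsup_lt hlt hbdd, eventually_gt_atTop (0:ℝ)]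
        with y h1 h2
      rcases eq_or_lt_of_le (norm_nonneg (f (-Complex.I * (y:ℂ)))) with h0 | h0
      · rw [← h0]; positivity
      · have h3 := (div_lt_iff₀ h2).mp h1
        calc ‖f (-Complex.I * (y:ℂ))‖ = Real.exp (Real.log ‖f (-Complex.I * (y:ℂ))‖) :=
              (Real.exp_log h0).symm
          _ ≤ Real.exp ((2*γ+ε/2)*y) := Real.exp_le_exp.2 (by linarith)
    -- tendsto zero on the real ray
    have hre : Tendsto (fun x : ℝ => F x) atTop (𝓝 0) := by
      have hg : Tendsto (fun x : ℝ => 2 * (x * Real.exp (-(ε/2 * x)))) atTop (𝓝 0) := by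
        have h1 := (Real.tendsto_pow_mul_exp_neg_atTop_nhds_zero 1).comp
          (tendsto_id.const_mul_atTop (show (0:ℝ) < ε/2 by positivity))
        have h2 := h1.const_mul (4/ε)
        rw [mul_zero] at h2
        refine h2.congr fun x => ?_
        simp only [Function.comp_apply, pow_one, id_eq]
        field_simp
        ring
      apply squeeze_zero_norm' _ hg
      filter_upwards [hev, eventually_ge_atTop (1:ℝ)] with x h1 hx1
      have hx0 : (0:ℝ) < x := lt_of_lt_of_le one_pos hx1
      rw [hnorm x]
      have hre' : ((x:ℂ)).re = x := Complex.ofReal_re x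
      have hnx : ‖(x:ℂ)‖ = x := by rw [Complex.norm_real, Real.norm_eq_abs, abs_of_pos hx0]
      have h2 : ‖f (-Complex.I * (x:ℂ)) - 1‖ ≤ Real.exp ((2*γ+ε/2)*x) + 1 := by
        refine (norm_sub_le _ _).trans ?_
        simp only [norm_one]
        linarith
      rw [hre', hnx]
      have hexp1 : Real.exp (-a*x) ≤ Real.exp (-(ε/2*x)) :=
        Real.exp_le_exp.2 (by nlinarith)
      calc Real.exp (-a * x) * (x * ‖f (-Complex.I * (x:ℂ)) - 1‖)
          ≤ Real.exp (-a * x) * (x * (Real.exp ((2*γ+ε/2)*x) + 1)) := by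
            gcongr
        _ = x * Real.exp (-(ε/2*x)) + x * Real.exp (-a*x) := by
            have harg : -a*x + (2*γ+ε/2)*x = -(ε/2*x) := by rw [ha]; ring
            calc Real.exp (-a * x) * (x * (Real.exp ((2*γ+ε/2)*x) + 1))
                = x * (Real.exp (-a*x) * Real.exp ((2*γ+ε/2)*x)) + x * Real.exp (-a*x) := by
                  ring
              _ = x * Real.exp (-(ε/2*x)) + x * Real.exp (-a*x) := by
                  rw [← Real.exp_add, harg]
        _ ≤ 2 * (x * Real.exp (-(ε/2 * x))) := by nlinarith [Real.exp_pos (-a*x)]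
    -- bound on the imaginary axis
    have him : ∀ x : ℝ, ‖F ((x:ℂ) * Complex.I)‖ ≤ C₀ := by
      intro x
      have hxI : -Complex.I * ((x:ℂ) * Complex.I) = (x:ℂ) := by
        rw [mul_comm (x:ℂ) Complex.I, ← mul_assoc]
        simp [Complex.I_mul_I]
      rw [hnorm, hxI]
      have h1 : ((x:ℂ) * Complex.I).re = 0 := by simp
      have h2 : ‖(x:ℂ) * Complex.I‖ = ‖(x:ℂ)‖ := by simp
      rw [h1, h2, mul_zero, Real.exp_zero, one_mul, ← norm_mul]
      exact hC₀ x
    -- growth condition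
    have hexpF : ∃ c < (2:ℝ), ∃ B, F =O[Bornology.cobounded ℂ ⊓ 𝓟 {z : ℂ | 0 < z.re}]
        fun z => Real.exp (B * ‖z‖ ^ (c : ℝ)) := by
      refine ⟨1, one_lt_two, a + A + 1, ?_⟩
      rw [Asymptotics.isBigO_iff]
      refine ⟨C + 1, Eventually.of_forall fun w => ?_⟩
      rw [hnorm w]
      have hw1 : Real.exp (-a * w.re) ≤ Real.exp (a * ‖w‖) := by
        apply Real.exp_le_exp.2
        have h1 : |w.re| ≤ ‖w‖ := by
          exact Complex.abs_re_le_norm w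
        nlinarith [neg_abs_le w.re, abs_nonneg w.re]
      have hw2 : ‖w‖ ≤ Real.exp ‖w‖ := by
        have := Real.add_one_le_exp ‖w‖; linarith
      have hw3 : ‖f (-Complex.I * w) - 1‖ ≤ (C+1) * Real.exp (A * ‖w‖) := by
        have hg := hgrowth (-Complex.I * w)
        have hnw : ‖-Complex.I * w‖ = ‖w‖ := by simp
        rw [hnw] at hg
        have h4 : (1:ℝ) ≤ Real.exp (A*‖w‖) := Real.one_le_exp (by positivity)
        calc ‖f (-Complex.I * w) - 1‖ ≤ ‖f (-Complex.I * w)‖ + 1 := by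
              refine (norm_sub_le _ _).trans ?_; simp
          _ ≤ C * Real.exp (A*‖w‖) + 1 := by linarith
          _ ≤ (C+1) * Real.exp (A*‖w‖) := by nlinarith
      calc Real.exp (-a * w.re) * (‖w‖ * ‖f (-Complex.I * w) - 1‖)
          ≤ Real.exp (a * ‖w‖) * (Real.exp ‖w‖ * ((C+1) * Real.exp (A * ‖w‖))) := by
            gcongr
          _ = (C+1) * (Real.exp (a * ‖w‖) * Real.exp ‖w‖ * Real.exp (A * ‖w‖)) := by
            ring
          _ = (C+1) * Real.exp ((a + A + 1) * ‖w‖) := by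
            have harg : a*‖w‖ + ‖w‖ + A*‖w‖ = (a+A+1)*‖w‖ := by ring
            rw [← Real.exp_add, ← Real.exp_add, harg]
          _ ≤ (C+1) * ‖Real.exp ((a + A + 1) * ‖w‖ ^ ((1:ℝ) : ℝ))‖ := by
            rw [Real.rpow_one, Real.norm_eq_abs, abs_of_pos (Real.exp_pos _)]
    -- Phragmen-Lindelof
    have hPL := PhragmenLindelof.right_half_plane_of_tendsto_zero_on_real
      hdF.diffContOnCl hexpF hre him (z := Complex.I * z₀)
      (by simp [Complex.mul_re]; linarith)
    have hIz : -Complex.I * (Complex.I * z₀) = z₀ := by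
      rw [← mul_assoc]
      simp [Complex.I_mul_I]
    rw [hnorm, hIz, hz₀] at hPL
    have h1 : (Complex.I * z₀).re = -z₀.im := by simp [Complex.mul_re]
    have h2 : ‖Complex.I * z₀‖ = ‖z₀‖ := by simp
    rw [h1, h2] at hPL
    simp only [zero_sub, norm_neg, norm_one, mul_one] at hPL
    -- hPL : exp (-a * -z₀.im) * ‖z₀‖ ≤ C₀
    have h3 : Real.exp (-a * z₀.im) > 0 := Real.exp_pos _
    calc ‖z₀‖ = Real.exp (-(a * z₀.im)) * (Real.exp (a * z₀.im) * ‖z₀‖) := by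
          rw [← mul_assoc, ← Real.exp_add]; simp
      _ ≤ Real.exp (-(a * z₀.im)) * C₀ := by
          have : Real.exp (a * z₀.im) * ‖z₀‖ ≤ C₀ := by
            have harg : -a * -z₀.im = a * z₀.im := by ring
            rw [harg] at hPL; exact hPL
          gcongr
      _ = C₀ * Real.exp (-(2*γ+ε) * z₀.im) := by rw [ha]; ring_nf
  -- limit ε → 0⁺
  have htend : Tendsto (fun ε : ℝ => C₀ * Real.exp (-(2*γ+ε) * z₀.im)) (𝓝[>] 0)
      (𝓝 (C₀ * Real.exp (-2*γ*z₀.im))) := by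
    have hc : Continuous fun ε : ℝ => C₀ * Real.exp (-(2*γ+ε) * z₀.im) := by
      continuity
    have h0 := (hc.tendsto 0).mono_left (nhdsWithin_le_nhds (s := Set.Ioi (0:ℝ)))
    have : -(2*γ+0) * z₀.im = -2*γ*z₀.im := by ring
    rwa [this] at h0
  exact ge_of_tendsto htend (eventually_nhdsWithin_of_forall fun ε hε => key ε hε)
end

section
/- Let γ > 0 and let f : ℂ → ℂ be an entire function of exponential type (|f(z)| ≤ C·e^{A'|z|} for some constants C, A' > 0) with limsup_{y→+∞} (log |f(−iy)|)/y ≤ 2γ. Assume that for some A ∈ ℂ one has C₁ := sup_{x∈ℝ} |x²·f(x) − x² − A·x| < ∞. Then every zero z₀ of f with Im z₀ ≤ 0 satisfies |z₀·(z₀ + A)| ≤ C₁ · e^{−2γ·Im z₀}. -/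
open MeasureTheory Set Filter

private lemma aux_pow_exp (n : ℕ) {b : ℝ} (hb : 0 < b) :
    Tendsto (fun x : ℝ => x ^ n * Real.exp (-b * x)) atTop (nhds 0) := by
  have h := tendsto_rpow_mul_exp_neg_mul_atTop_nhds_zero n b hb
  refine h.congr' ?_
  filter_upwards [eventually_ge_atTop (0:ℝ)] with x hx
  rw [Real.rpow_natCast]

theorem stmt11 (γ : ℝ) (hγ : 0 < γ) (f : ℂ → ℂ) (hf : Differentiable ℂ f)
    (C A' : ℝ) (hC : 0 < C) (hA' : 0 < A')
    (hgrowth : ∀ z : ℂ, ‖f z‖ ≤ C * Real.exp (A' * ‖z‖))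
    (htype : limsup (fun y : ℝ => Real.log ‖f (-Complex.I * (y : ℂ))‖ / y) atTop ≤ 2 * γ)
    (A : ℂ) (C₁ : ℝ)
    (hC₁ : ∀ x : ℝ, ‖(x : ℂ) ^ 2 * f x - (x : ℂ) ^ 2 - A * (x : ℂ)‖ ≤ C₁) :
    ∀ z₀ : ℂ, f z₀ = 0 → z₀.im ≤ 0 →
      ‖z₀ * (z₀ + A)‖ ≤ C₁ * Real.exp (-2 * γ * z₀.im) := by
  intro z₀ hz₀ him₀
  set G : ℂ → ℂ := fun z => z ^ 2 * f z - z ^ 2 - A * z with hGdef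
  have hGdiff : Differentiable ℂ G := by
    fun_prop
  have hGz₀ : G z₀ = -(z₀ * (z₀ + A)) := by simp [hGdef, hz₀]; ring
  have hGnorm : ∀ z : ℂ, ‖G z‖ ≤ ‖z‖ ^ 2 * ‖f z‖ + ‖z‖ ^ 2 + ‖A‖ * ‖z‖ := by
    intro z
    calc ‖G z‖ ≤ ‖z ^ 2 * f z - z ^ 2‖ + ‖A * z‖ := norm_sub_le _ _
      _ ≤ ‖z ^ 2 * f z‖ + ‖z ^ 2‖ + ‖A * z‖ := by
          gcongr; exact norm_sub_le _ _
      _ = ‖z‖ ^ 2 * ‖f z‖ + ‖z‖ ^ 2 + ‖A‖ * ‖z‖ := by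
          simp [norm_mul, norm_pow]
  -- boundedness of the limsup quantity
  have hbdd : IsBoundedUnder (· ≤ ·) atTop
      (fun y : ℝ => Real.log ‖f (-Complex.I * (y : ℂ))‖ / y) := by
    refine ⟨|Real.log C| + A', ?_⟩
    rw [eventually_map]
    filter_upwards [eventually_ge_atTop (1:ℝ)] with y hy
    have hy0 : (0:ℝ) < y := lt_of_lt_of_le one_pos hy
    have hnorm : ‖(-Complex.I * (y:ℂ))‖ = y := by
      simp [norm_mul, abs_of_nonneg hy0.le]
    have hlog : Real.log ‖f (-Complex.I * (y:ℂ))‖ ≤ |Real.log C| + A' * y := by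
      rcases eq_or_lt_of_le (norm_nonneg (f (-Complex.I * (y:ℂ)))) with h0 | h0
      · rw [← h0, Real.log_zero]
        positivity
      · calc Real.log ‖f (-Complex.I * (y:ℂ))‖
            ≤ Real.log (C * Real.exp (A' * ‖(-Complex.I * (y:ℂ))‖)) :=
              Real.log_le_log h0 (hgrowth _)
          _ = Real.log C + A' * y := by
              rw [Real.log_mul (ne_of_gt hC) (Real.exp_ne_zero _), Real.log_exp, hnorm]
          _ ≤ |Real.log C| + A' * y := by gcongr; exact le_abs_self _
    calc Real.log ‖f (-Complex.I * (y:ℂ))‖ / y ≤ (|Real.log C| + A' * y) / y := by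
          gcongr
      _ = |Real.log C| / y + A' := by field_simp
      _ ≤ |Real.log C| + A' := by
          gcongr
          exact div_le_self (abs_nonneg _) hy
  -- key estimate for each ε > 0
  have key : ∀ ε : ℝ, 0 < ε → ‖G z₀‖ ≤ C₁ * Real.exp (-((2*γ+ε) * z₀.im)) := by
    intro ε hε
    set c : ℝ := 2*γ + ε with hc
    have hc0 : 0 < c := by positivity
    set F : ℂ → ℂ := fun w =>
      G (-Complex.I * w) * Complex.exp (-(c:ℂ) * Complex.I * (-Complex.I * w)) with hFdef
    have hEnorm : ∀ z : ℂ, ‖Complex.exp (-(c:ℂ) * Complex.I * z)‖ = Real.exp (c * z.im) := by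
      intro z
      rw [Complex.norm_exp]
      congr 1
      simp [Complex.mul_re]
    have hFnorm : ∀ w : ℂ, ‖F w‖ = ‖G (-Complex.I * w)‖ * Real.exp (-(c * w.re)) := by
      intro w
      rw [hFdef]
      simp only [norm_mul, hEnorm]
      congr 2
      simp
    -- apply Phragmen-Lindelof in the right half-plane
    have hPL : ‖F (Complex.I * z₀)‖ ≤ C₁ := by
      refine PhragmenLindelof.right_half_plane_of_tendsto_zero_on_real ?_ ?_ ?_ ?_ ?_
      · exact Differentiable.diffContOnCl (by fun_prop)
      · refine ⟨1, one_lt_two, A' + 2, Asymptotics.IsBigO.of_bound (C + 1 + ‖A‖) ?_⟩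
        have h1 : ∀ᶠ w : ℂ in Bornology.cobounded ℂ ⊓ 𝓟 {z | 0 < z.re}, 1 ≤ ‖w‖ :=
          (eventually_cobounded_le_norm (E := ℂ) 1).filter_mono inf_le_left
        have h2 : ∀ᶠ w : ℂ in Bornology.cobounded ℂ ⊓ 𝓟 {z | 0 < z.re}, 0 < w.re :=
          (eventually_principal.mpr (fun w hw => hw)).filter_mono inf_le_right
        filter_upwards [h1, h2] with w hw1 hw2
        have hnw : ‖(-Complex.I * w)‖ = ‖w‖ := by simp
        have hw0 : (0:ℝ) < ‖w‖ := lt_of_lt_of_le one_pos hw1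
        have hexp1 : ‖w‖ ≤ Real.exp ‖w‖ := (Real.add_one_le_exp _).trans' (by linarith)
        have hexp2 : ‖w‖ ^ 2 ≤ Real.exp (2 * ‖w‖) := by
          calc ‖w‖ ^ 2 ≤ (Real.exp ‖w‖) ^ 2 := by gcongr
            _ = Real.exp (2 * ‖w‖) := by rw [← Real.exp_nat_mul]; norm_num
        have hb1 : ‖F w‖ ≤ ‖G (-Complex.I * w)‖ := by
          rw [hFnorm]
          refine mul_le_of_le_one_right (norm_nonneg _) (Real.exp_le_one_iff.2 ?_)
          simp only [neg_nonpos]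
          positivity
        calc ‖F w‖ ≤ ‖G (-Complex.I * w)‖ := hb1
          _ ≤ ‖w‖ ^ 2 * ‖f (-Complex.I * w)‖ + ‖w‖ ^ 2 + ‖A‖ * ‖w‖ := by
              have := hGnorm (-Complex.I * w); rwa [hnw] at this
          _ ≤ ‖w‖ ^ 2 * (C * Real.exp (A' * ‖w‖)) + ‖w‖ ^ 2 + ‖A‖ * ‖w‖ := by
              gcongr
              have := hgrowth (-Complex.I * w); rwa [hnw] at this
          _ ≤ Real.exp (2 * ‖w‖) * (C * Real.exp (A' * ‖w‖)) + Real.exp (2 * ‖w‖)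
              + ‖A‖ * Real.exp ‖w‖ := by gcongr
          _ ≤ C * Real.exp ((A' + 2) * ‖w‖) + Real.exp ((A' + 2) * ‖w‖)
              + ‖A‖ * Real.exp ((A' + 2) * ‖w‖) := by
              have hmul : Real.exp (2 * ‖w‖) * Real.exp (A' * ‖w‖)
                  = Real.exp ((A' + 2) * ‖w‖) := by
                rw [← Real.exp_add]; ring_nf
              have h2t : Real.exp (2 * ‖w‖) ≤ Real.exp ((A' + 2) * ‖w‖) :=
                Real.exp_le_exp.2 (by nlinarith)
              have h1t : Real.exp ‖w‖ ≤ Real.exp ((A' + 2) * ‖w‖) :=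
                Real.exp_le_exp.2 (by nlinarith)
              have heq : Real.exp (2 * ‖w‖) * (C * Real.exp (A' * ‖w‖))
                  = C * Real.exp ((A' + 2) * ‖w‖) := by
                rw [← hmul]; ring
              rw [heq]
              gcongr
          _ = (C + 1 + ‖A‖) * Real.exp ((A' + 2) * ‖w‖) := by ring
          _ ≤ (C + 1 + ‖A‖) * Real.exp ((A' + 2) * ‖w‖ ^ (1:ℝ)) := by
              rw [Real.rpow_one]
          _ = (C + 1 + ‖A‖) * ‖Real.exp ((A' + 2) * ‖w‖ ^ (1:ℝ))‖ := by
              rw [Real.norm_eq_abs, abs_of_pos (Real.exp_pos _)]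
      · -- tendsto zero on the real axis
        have hlt : ∀ᶠ x : ℝ in atTop,
            Real.log ‖f (-Complex.I * (x : ℂ))‖ / x < 2*γ + ε/2 :=
          eventually_lt_of_limsup_lt (lt_of_le_of_lt htype (by linarith)) hbdd
        have hfb : ∀ᶠ x : ℝ in atTop,
            ‖f (-Complex.I * (x : ℂ))‖ ≤ Real.exp ((2*γ + ε/2) * x) := by
          filter_upwards [hlt, eventually_gt_atTop (0:ℝ)] with x hx hx0
          rcases eq_or_lt_of_le (norm_nonneg (f (-Complex.I * (x:ℂ)))) with h0 | h0
          · rw [← h0]; positivity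
          · have : Real.log ‖f (-Complex.I * (x:ℂ))‖ < (2*γ + ε/2) * x :=
              (div_lt_iff₀ hx0).1 hx
            calc ‖f (-Complex.I * (x:ℂ))‖
                = Real.exp (Real.log ‖f (-Complex.I * (x:ℂ))‖) := (Real.exp_log h0).symm
              _ ≤ Real.exp ((2*γ + ε/2) * x) := Real.exp_le_exp.2 this.le
        have hsq : ∀ᶠ x : ℝ in atTop, ‖F (x:ℂ)‖ ≤
            2 * (x ^ 2 * Real.exp (-(ε/2) * x)) + ‖A‖ * (x ^ 1 * Real.exp (-(ε/2) * x)) := by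
          filter_upwards [hfb, eventually_gt_atTop (0:ℝ)] with x hfx hx0
          have hre : ((x:ℂ)).re = x := Complex.ofReal_re x
          have hnx : ‖(-Complex.I * (x:ℂ))‖ = x := by
            simp [abs_of_nonneg hx0.le]
          calc ‖F (x:ℂ)‖ = ‖G (-Complex.I * (x:ℂ))‖ * Real.exp (-(c * x)) := by
                rw [hFnorm, hre]
            _ ≤ (x ^ 2 * Real.exp ((2*γ + ε/2) * x) + x ^ 2 + ‖A‖ * x)
                * Real.exp (-(c * x)) := by
                gcongr
                have := hGnorm (-Complex.I * (x:ℂ)); rw [hnx] at this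
                exact this.trans (by gcongr)
            _ = x ^ 2 * Real.exp (-(ε/2) * x)
                + x ^ 2 * Real.exp (-(c * x)) + ‖A‖ * (x * Real.exp (-(c * x))) := by
                have hee : Real.exp ((2*γ + ε/2) * x) * Real.exp (-(c * x))
                    = Real.exp (-(ε/2) * x) := by
                  rw [← Real.exp_add]; congr 1; rw [hc]; ring
                linear_combination (x^2 : ℝ) * hee
            _ ≤ x ^ 2 * Real.exp (-(ε/2) * x)
                + x ^ 2 * Real.exp (-(ε/2) * x) + ‖A‖ * (x * Real.exp (-(ε/2) * x)) := by
                have hle : Real.exp (-(c * x)) ≤ Real.exp (-(ε/2) * x) := by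
                  apply Real.exp_le_exp.2
                  rw [hc]
                  nlinarith
                gcongr
            _ = 2 * (x ^ 2 * Real.exp (-(ε/2) * x)) + ‖A‖ * (x ^ 1 * Real.exp (-(ε/2) * x)) := by
                ring
        have hε2 : (0:ℝ) < ε/2 := by positivity
        have hT : Tendsto (fun x : ℝ =>
            2 * (x ^ 2 * Real.exp (-(ε/2) * x)) + ‖A‖ * (x ^ 1 * Real.exp (-(ε/2) * x)))
            atTop (nhds 0) := by
          have t1 := (aux_pow_exp 2 hε2).const_mul 2
          have t2 := (aux_pow_exp 1 hε2).const_mul ‖A‖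
          simpa using t1.add t2
        exact squeeze_zero_norm' hsq hT
      · -- bound on the imaginary axis
        intro x
        have hx : -Complex.I * ((x:ℂ) * Complex.I) = (x:ℂ) := by
          ring_nf; simp [Complex.I_sq]
        rw [hFdef]
        simp only [hx]
        rw [norm_mul, hEnorm]
        simp only [Complex.ofReal_im, mul_zero, Real.exp_zero, mul_one]
        exact hC₁ x
      · simpa using him₀
    -- unpack the conclusion
    have hiz : -Complex.I * (Complex.I * z₀) = z₀ := by
      ring_nf; simp [Complex.I_sq]
    rw [hFdef] at hPL
    simp only [hiz] at hPL
    rw [norm_mul, hEnorm] at hPL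
    rw [Real.exp_neg, ← div_eq_mul_inv, le_div_iff₀ (Real.exp_pos _)]
    exact hPL
  -- take the limit ε → 0⁺
  have hlim : Tendsto (fun ε : ℝ => C₁ * Real.exp (-((2*γ+ε) * z₀.im)))
      (nhdsWithin 0 (Set.Ioi 0)) (nhds (C₁ * Real.exp (-(2*γ*z₀.im)))) := by
    have hcont : Continuous fun ε : ℝ => C₁ * Real.exp (-((2*γ+ε) * z₀.im)) := by
      fun_prop
    have := hcont.tendsto 0
    simp only [add_zero] at this
    exact this.mono_left nhdsWithin_le_nhds
  have hG : ‖G z₀‖ ≤ C₁ * Real.exp (-(2*γ*z₀.im)) := by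
    refine ge_of_tendsto hlim ?_
    filter_upwards [self_mem_nhdsWithin] with ε hε
    exact key ε hε
  calc ‖z₀ * (z₀ + A)‖ = ‖G z₀‖ := by rw [hGz₀, norm_neg]
    _ ≤ C₁ * Real.exp (-(2*γ*z₀.im)) := hG
    _ = C₁ * Real.exp (-2*γ*z₀.im) := by ring_nf
end

section
/- Let q ∈ L¹(ℝ) ∩ L²(ℝ). Then for every x ∈ ℝ, every integer n ≥ 1, and every λ ∈ ℂ with Im λ ≥ 0, the iterate χ_n satisfies |χ_n(x,λ)| ≤ (1/(2n)!) · (∫_x^∞ |q(τ)| dτ)^{2n}. -/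
open MeasureTheory Set Filter

noncomputable def Qf (q : ℝ → ℂ) (x : ℝ) : ℝ := ∫ t in Set.Ioi x, ‖q t‖
variable {q : ℝ → ℂ}
lemma Qf_split (hq : Integrable q) {x y : ℝ} (h : x ≤ y) :
    Qf q x = (∫ t in Set.Ioc x y, ‖q t‖) + Qf q y := by
  have hs : Set.Ioi x = Set.Ioc x y ∪ Set.Ioi y := (Set.Ioc_union_Ioi_eq_Ioi h).symm
  rw [Qf, hs, setIntegral_union Set.Ioc_disjoint_Ioi_same measurableSet_Ioi
    hq.norm.integrableOn hq.norm.integrableOn]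
  rfl
lemma Qf_nonneg (q : ℝ → ℂ) (x : ℝ) : 0 ≤ Qf q x :=
  setIntegral_nonneg measurableSet_Ioi fun _ _ => norm_nonneg _
lemma Qf_anti (hq : Integrable q) : Antitone (Qf q) := by
  intro x y h
  rw [Qf_split hq h]
  have : 0 ≤ ∫ t in Set.Ioc x y, ‖q t‖ :=
    setIntegral_nonneg measurableSet_Ioc fun _ _ => norm_nonneg _
  linarith
lemma Qf_le (hq : Integrable q) (x : ℝ) : Qf q x ≤ ∫ t, ‖q t‖ :=
  setIntegral_le_integral hq.norm (Filter.Eventually.of_forall fun _ => norm_nonneg _)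
lemma Qf_meas (hq : Integrable q) : Measurable (Qf q) := (Qf_anti hq).measurable
lemma int_fQk (hq : Integrable q) (k : ℕ) (x : ℝ) :
    IntegrableOn (fun s => ‖q s‖ * Qf q s ^ k) (Set.Ioi x) := by
  rw [IntegrableOn]
  have he : (fun s => ‖q s‖ * Qf q s ^ k) = fun s => Qf q s ^ k * ‖q s‖ := by
    ext s; ring
  rw [he]
  refine Integrable.bdd_mul (c := (∫ t, ‖q t‖) ^ k) hq.norm.integrableOn
    ((Qf_meas hq).pow_const k).aestronglyMeasurable ?_
  refine Filter.Eventually.of_forall fun s => ?_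
  rw [Real.norm_eq_abs, abs_pow, abs_of_nonneg (Qf_nonneg q s)]
  exact pow_le_pow_left₀ (Qf_nonneg q s) (Qf_le hq s) k

lemma keyI (hq : Integrable q) (k : ℕ) :
    ∀ x : ℝ, ∫ s in Set.Ioi x, ‖q s‖ * Qf q s ^ k = Qf q x ^ (k + 1) / (k + 1) := by
  induction k with
  | zero => intro x; simp [Qf]
  | succ k ih =>
    intro x
    have hIH := ih x
    have hsub : IntegrableOn
        (fun s => (Qf q x - Qf q s) * (‖q s‖ * Qf q s ^ k)) (Set.Ioi x) := by
      refine Integrable.bdd_mul (c := |Qf q x| + ∫ t, ‖q t‖) (int_fQk hq k x)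
        ((measurable_const.sub (Qf_meas hq)).aestronglyMeasurable) ?_
      refine Filter.Eventually.of_forall fun s => ?_
      have h1 := Qf_nonneg q s
      have h2 := Qf_le hq s
      rw [Real.norm_eq_abs]
      have h3 : |Qf q x - Qf q s| ≤ |Qf q x| + |Qf q s| := abs_sub _ _
      rw [abs_of_nonneg h1] at h3
      linarith
    have hJ : (∫ s in Set.Ioi x, (Qf q x - Qf q s) * (‖q s‖ * Qf q s ^ k))
        = (∫ s in Set.Ioi x, ‖q s‖ * Qf q s ^ (k + 1)) / (k + 1) := by
      have e1 : (∫ s in Set.Ioi x, (Qf q x - Qf q s) * (‖q s‖ * Qf q s ^ k))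
          = ∫ s in Set.Ioi x, ∫ t in Set.Ioi x,
              (Set.Iic s).indicator (fun t => ‖q t‖) t * (‖q s‖ * Qf q s ^ k) := by
        refine setIntegral_congr_fun measurableSet_Ioi fun s hs => ?_
        rw [integral_mul_const, setIntegral_indicator measurableSet_Iic,
          Set.Ioi_inter_Iic, Qf_split hq (le_of_lt hs)]
        ring
      have hFint : Integrable (Function.uncurry fun s t =>
          (Set.Iic s).indicator (fun t => ‖q t‖) t * (‖q s‖ * Qf q s ^ k))
          ((volume.restrict (Set.Ioi x)).prod (volume.restrict (Set.Ioi x))) := by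
        have heq : (Function.uncurry fun s t =>
            (Set.Iic s).indicator (fun t => ‖q t‖) t * (‖q s‖ * Qf q s ^ k))
            = {p : ℝ × ℝ | p.2 ≤ p.1}.indicator
                (fun p => (‖q p.1‖ * Qf q p.1 ^ k) * ‖q p.2‖) := by
          ext p
          rcases p with ⟨s, t⟩
          by_cases h : t ≤ s
          · rw [Set.indicator_of_mem (show (s,t) ∈ {p : ℝ × ℝ | p.2 ≤ p.1} from h)]
            simp only [Function.uncurry]
            rw [Set.indicator_of_mem (Set.mem_Iic.mpr h)]
            ring
          · simp only [Function.uncurry]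
            rw [Set.indicator_of_notMem (fun hh => h (Set.mem_Iic.mp hh)),
              Set.indicator_of_notMem (show (s,t) ∉ {p : ℝ × ℝ | p.2 ≤ p.1} from h), zero_mul]
        rw [heq]
        exact ((int_fQk hq k x).mul_prod hq.norm.integrableOn).indicator
          (measurableSet_le measurable_snd measurable_fst)
      have e2 := integral_integral_swap hFint
      have e3 : (∫ t in Set.Ioi x, ∫ s in Set.Ioi x,
          (Set.Iic s).indicator (fun t => ‖q t‖) t * (‖q s‖ * Qf q s ^ k))
          = ∫ t in Set.Ioi x, ‖q t‖ * Qf q t ^ (k + 1) / (k + 1) := by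
        refine setIntegral_congr_fun measurableSet_Ioi fun t ht => ?_
        have einner : (fun s => (Set.Iic s).indicator (fun t => ‖q t‖) t * (‖q s‖ * Qf q s ^ k))
            = fun s => (Set.Ici t).indicator (fun s => ‖q t‖ * (‖q s‖ * Qf q s ^ k)) s := by
          ext s
          by_cases h : t ≤ s
          · rw [Set.indicator_of_mem (Set.mem_Iic.mpr h),
              Set.indicator_of_mem (Set.mem_Ici.mpr h)]
          · rw [Set.indicator_of_notMem (fun hh => h (Set.mem_Iic.mp hh)),
              Set.indicator_of_notMem (fun hh => h (Set.mem_Ici.mp hh)), zero_mul]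
        rw [einner, setIntegral_indicator measurableSet_Ici]
        have hins : Set.Ioi x ∩ Set.Ici t = Set.Ici t := by
          apply Set.inter_eq_self_of_subset_right
          intro s hs
          exact lt_of_lt_of_le ht (Set.mem_Ici.mp hs)
        rw [hins, integral_Ici_eq_integral_Ioi, integral_const_mul, ih t]
        ring
      rw [e1, e2, e3, integral_div]
    have hmul : Qf q x * (∫ s in Set.Ioi x, ‖q s‖ * Qf q s ^ k)
        = (∫ s in Set.Ioi x, (Qf q x - Qf q s) * (‖q s‖ * Qf q s ^ k))
          + ∫ s in Set.Ioi x, ‖q s‖ * Qf q s ^ (k + 1) := by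
      rw [← integral_const_mul, ← integral_add hsub (int_fQk hq (k + 1) x)]
      refine setIntegral_congr_fun measurableSet_Ioi fun s _ => ?_
      ring
    rw [hIH, hJ] at hmul
    set L := ∫ s in Set.Ioi x, ‖q s‖ * Qf q s ^ (k + 1) with hL
    have hk : ((k:ℝ) + 1) ≠ 0 := by positivity
    have hk2 : ((k:ℝ) + 1 + 1) ≠ 0 := by positivity
    have hpow : Qf q x ^ (k + 1 + 1) = Qf q x ^ (k + 1) * Qf q x := pow_succ _ _
    push_cast
    rw [eq_div_iff hk2, hpow]
    field_simp at hmul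
    linarith [hmul]

lemma int_sub (hq : Integrable q) (k : ℕ) (x : ℝ) :
    IntegrableOn (fun s => (Qf q x - Qf q s) * (‖q s‖ * Qf q s ^ k)) (Set.Ioi x) := by
  refine Integrable.bdd_mul (c := |Qf q x| + ∫ t, ‖q t‖) (int_fQk hq k x)
    ((measurable_const.sub (Qf_meas hq)).aestronglyMeasurable) ?_
  refine Filter.Eventually.of_forall fun s => ?_
  have h1 := Qf_nonneg q s
  have h2 := Qf_le hq s
  rw [Real.norm_eq_abs]
  have h3 : |Qf q x - Qf q s| ≤ |Qf q x| + |Qf q s| := abs_sub _ _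
  rw [abs_of_nonneg h1] at h3
  linarith

lemma keyJ (hq : Integrable q) (k : ℕ) (x : ℝ) :
    ∫ s in Set.Ioi x, (Qf q x - Qf q s) * (‖q s‖ * Qf q s ^ k)
      = Qf q x ^ (k + 2) / (((k:ℝ) + 1) * ((k:ℝ) + 2)) := by
  have e1 : (∫ s in Set.Ioi x, (Qf q x - Qf q s) * (‖q s‖ * Qf q s ^ k))
      = ∫ s in Set.Ioi x,
          (Qf q x * (‖q s‖ * Qf q s ^ k) - ‖q s‖ * Qf q s ^ (k + 1)) := by
    refine setIntegral_congr_fun measurableSet_Ioi fun s _ => ?_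
    ring
  rw [e1, integral_sub ((int_fQk hq k x).const_mul _) (int_fQk hq (k + 1) x),
    integral_const_mul, keyI hq k x, keyI hq (k + 1) x]
  have hk : ((k:ℝ) + 1) ≠ 0 := by positivity
  have hk2 : ((k:ℝ) + 2) ≠ 0 := by positivity
  have hpow2 : Qf q x ^ (k + 2) = Qf q x ^ (k + 1) * Qf q x := pow_succ _ _
  push_cast
  rw [hpow2]
  field_simp
  ring

lemma Gker_bound (hq : Integrable q) {l : ℂ} (him : 0 ≤ l.im) {x s : ℝ} (hxs : x ≤ s) :
    ‖Gker q x s l‖ ≤ ‖q s‖ * (Qf q x - Qf q s) := by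
  have key : ‖∫ t in x..s, Complex.exp (2 * Complex.I * l * ((s : ℂ) - (t : ℂ))) * q t‖
      ≤ Qf q x - Qf q s := by
    have h1 : ‖∫ t in x..s, Complex.exp (2 * Complex.I * l * ((s : ℂ) - (t : ℂ))) * q t‖
        ≤ |∫ t in x..s, ‖q t‖| := by
      apply intervalIntegral.norm_integral_le_abs_of_norm_le _ hq.norm.intervalIntegrable
      rw [Set.uIoc_of_le hxs]
      filter_upwards [ae_restrict_mem measurableSet_Ioc] with t ht
      rw [norm_mul]
      have hre : (2 * Complex.I * l * ((s : ℂ) - (t : ℂ))).re = -2 * l.im * (s - t) := by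
        simp [Complex.mul_re, Complex.mul_im, Complex.I_re, Complex.I_im]
      have : ‖Complex.exp (2 * Complex.I * l * ((s : ℂ) - (t : ℂ)))‖ ≤ 1 := by
        rw [Complex.norm_exp, hre]
        rw [show (1:ℝ) = Real.exp 0 from (Real.exp_zero).symm]
        apply Real.exp_le_exp.mpr
        nlinarith [ht.2]
      calc ‖Complex.exp (2 * Complex.I * l * ((s : ℂ) - (t : ℂ)))‖ * ‖q t‖
          ≤ 1 * ‖q t‖ := by gcongr
        _ = ‖q t‖ := one_mul _
    have h2 : ∫ t in x..s, ‖q t‖ = Qf q x - Qf q s := by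
      rw [intervalIntegral.integral_of_le hxs, Qf_split hq hxs]; ring
    rw [h2] at h1
    have : 0 ≤ Qf q x - Qf q s := by
      rw [Qf_split hq hxs]
      have : 0 ≤ ∫ t in Set.Ioc x s, ‖q t‖ :=
        setIntegral_nonneg measurableSet_Ioc fun _ _ => norm_nonneg _
      linarith
    rwa [abs_of_nonneg this] at h1
  rw [Gker, norm_mul, RCLike.norm_conj]
  exact mul_le_mul_of_nonneg_left key (norm_nonneg _)

lemma chi_bound_s12 (hq : Integrable q) {l : ℂ} (him : 0 ≤ l.im) :
    ∀ n : ℕ, ∀ x : ℝ, ‖chiIter q n x l‖ ≤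
      Qf q x ^ (2 * n) / (Nat.factorial (2 * n) : ℝ) := by
  intro n
  induction n with
  | zero => intro x; simp [chiIter]
  | succ n ih =>
    intro x
    have hgi : IntegrableOn
        (fun s => (Qf q x - Qf q s) * (‖q s‖ * Qf q s ^ (2 * n))
          / (Nat.factorial (2 * n) : ℝ)) (Set.Ioi x) :=
      (int_sub hq (2 * n) x).div_const _
    have hstep : ‖chiIter q (n + 1) x l‖ ≤
        ∫ s in Set.Ioi x, (Qf q x - Qf q s) * (‖q s‖ * Qf q s ^ (2 * n))
          / (Nat.factorial (2 * n) : ℝ) := by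
      show ‖∫ s in Set.Ioi x, Gker q x s l * chiIter q n s l‖ ≤ _
      refine norm_integral_le_of_norm_le hgi ?_
      filter_upwards [ae_restrict_mem measurableSet_Ioi] with s hs
      have hxs : x ≤ s := le_of_lt hs
      have hfac : (0:ℝ) < (Nat.factorial (2 * n) : ℝ) := by
        exact_mod_cast Nat.factorial_pos _
      calc ‖Gker q x s l * chiIter q n s l‖
          = ‖Gker q x s l‖ * ‖chiIter q n s l‖ := norm_mul _ _
        _ ≤ (‖q s‖ * (Qf q x - Qf q s)) * (Qf q s ^ (2 * n) / (Nat.factorial (2 * n) : ℝ)) := by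
            refine mul_le_mul (Gker_bound hq him hxs) (ih s) (norm_nonneg _) ?_
            exact mul_nonneg (norm_nonneg _) (sub_nonneg.mpr (Qf_anti hq hxs))
        _ = (Qf q x - Qf q s) * (‖q s‖ * Qf q s ^ (2 * n))
              / (Nat.factorial (2 * n) : ℝ) := by ring
    rw [integral_div, keyJ hq (2 * n) x] at hstep
    refine hstep.trans (le_of_eq ?_)
    have h2n : 2 * (n + 1) = 2 * n + 1 + 1 := by ring
    rw [h2n]
    rw [Nat.factorial_succ (2 * n + 1), Nat.factorial_succ (2 * n)]
    have e : (2 * n : ℕ) + 2 = 2 * n + 1 + 1 := by ring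
    rw [← e]
    have hfac : (0:ℝ) < (Nat.factorial (2 * n) : ℝ) := by
      exact_mod_cast Nat.factorial_pos _
    have h1 : ((2 * n : ℕ):ℝ) + 1 ≠ 0 := by positivity
    have h2 : ((2 * n : ℕ):ℝ) + 2 ≠ 0 := by positivity
    rw [div_div]
    congr 1
    push_cast
    ring

theorem stmt12 (q : ℝ → ℂ) (hq1 : Integrable q) (hq2 : MemLp q 2) :
    ∀ x : ℝ, ∀ n : ℕ, 1 ≤ n → ∀ l : ℂ, 0 ≤ l.im →
      ‖chiIter q n x l‖ ≤
        (1 / (Nat.factorial (2 * n) : ℝ)) * (∫ t in Set.Ioi x, ‖q t‖) ^ (2 * n) := by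
  intro x n _ l him
  have h := chi_bound_s12 hq1 him n x
  rw [Qf] at h
  calc ‖chiIter q n x l‖
      ≤ (∫ t in Set.Ioi x, ‖q t‖) ^ (2 * n) / (Nat.factorial (2 * n) : ℝ) := h
    _ = (1 / (Nat.factorial (2 * n) : ℝ)) * (∫ t in Set.Ioi x, ‖q t‖) ^ (2 * n) := by ring
end

section
/- Let q ∈ L¹(ℝ) ∩ L²(ℝ). Then for every x ∈ ℝ and every λ ∈ ℂ with Im λ > 0, one has |χ(x,λ) − 1| ≤ Φ(x) · ‖q‖₂ · ‖q‖₁ / (Im λ)^{1/2}. -/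
open MeasureTheory Set Filter

namespace S14


noncomputable def tp (f : ℝ → ℝ) (x : ℝ) : ℝ := ∫ s in Set.Ioi x, f s

variable {f : ℝ → ℝ}

lemma tp_nonneg (hf : ∀ s, 0 ≤ f s) (x : ℝ) : 0 ≤ tp f x :=
  setIntegral_nonneg measurableSet_Ioi fun s _ => hf s

lemma tp_anti (hfi : Integrable f) (hf : ∀ s, 0 ≤ f s) : Antitone (tp f) := fun _ _ hab =>
  setIntegral_mono_set hfi.integrableOn (ae_of_all _ hf)
    (HasSubset.Subset.eventuallyLE (Ioi_subset_Ioi hab))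

lemma tp_le (hfi : Integrable f) (hf : ∀ s, 0 ≤ f s) (x : ℝ) : tp f x ≤ ∫ s, f s :=
  setIntegral_le_integral hfi (ae_of_all _ hf)

lemma tp_sub (hfi : Integrable f) {x t : ℝ} (h : x ≤ t) :
    ∫ s in Set.Ioc x t, f s = tp f x - tp f t := by
  have : tp f x = (∫ s in Set.Ioc x t, f s) + tp f t := by
    rw [tp, ← Ioc_union_Ioi_eq_Ioi h,
      setIntegral_union (Ioc_disjoint_Ioi le_rfl) measurableSet_Ioi
        hfi.integrableOn hfi.integrableOn]
    rfl
  linarith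

lemma int_mul_pow (hfi : Integrable f) (hf : ∀ s, 0 ≤ f s) (k : ℕ) :
    Integrable (fun s => f s * tp f s ^ k) := by
  have hm : Measurable (tp f) := (tp_anti hfi hf).measurable
  refine Integrable.mono' (hfi.mul_const ((∫ s, f s) ^ k))
    (hfi.1.mul ((hm.pow_const k).aestronglyMeasurable)) (ae_of_all _ fun s => ?_)
  rw [Real.norm_eq_abs, abs_of_nonneg (mul_nonneg (hf s) (pow_nonneg (tp_nonneg hf s) k))]
  exact mul_le_mul_of_nonneg_left
    (pow_le_pow_left₀ (tp_nonneg hf s) (tp_le hfi hf s) k) (hf s)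

lemma moment (hfi : Integrable f) (hf : ∀ s, 0 ≤ f s) :
    ∀ (k : ℕ) (x : ℝ),
      ∫ s in Set.Ioi x, f s * tp f s ^ k = tp f x ^ (k + 1) / (k + 1) := by
  intro k
  induction k with
  | zero => intro x; simp [tp]
  | succ k ih =>
    intro x
    set g : ℝ → ℝ := fun t => f t * tp f t ^ k with hg
    have hgint : Integrable g := int_mul_pow hfi hf k
    have hgint1 : Integrable (fun t => f t * tp f t ^ (k + 1)) := int_mul_pow hfi hf (k + 1)
    set F : ℝ → ℝ → ℝ := fun s t => ({p : ℝ × ℝ | p.1 < p.2}).indicator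
      (fun p => f p.1 * g p.2) (s, t) with hF
    have hFint : Integrable (Function.uncurry F)
        ((volume.restrict (Set.Ioi x)).prod (volume.restrict (Set.Ioi x))) := by
      have h1 : Integrable (fun p : ℝ × ℝ => f p.1 * g p.2)
          ((volume.restrict (Set.Ioi x)).prod (volume.restrict (Set.Ioi x))) :=
        Integrable.mul_prod hfi.integrableOn hgint.integrableOn
      have h2 : MeasurableSet {p : ℝ × ℝ | p.1 < p.2} :=
        measurableSet_lt measurable_fst measurable_snd
      exact h1.indicator h2
    have inner1 : ∀ s ∈ Set.Ioi x,
        ∫ t in Set.Ioi x, F s t = f s * (tp f s ^ (k + 1) / (k + 1)) := by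
      intro s hs
      have : ∀ t, F s t = f s * (Set.Ioi s).indicator g t := by
        intro t
        by_cases h : s < t <;> simp [hF, Set.indicator, h]
      rw [integral_congr_ae (ae_of_all _ this), integral_const_mul,
        setIntegral_indicator measurableSet_Ioi]
      have : Set.Ioi x ∩ Set.Ioi s = Set.Ioi s := by
        rw [Set.inter_eq_right]; exact Ioi_subset_Ioi (le_of_lt hs)
      rw [this, ih s]
    have inner2 : ∀ t ∈ Set.Ioi x,
        ∫ s in Set.Ioi x, F s t = g t * (tp f x - tp f t) := by
      intro t ht
      have : ∀ s, F s t = g t * (Set.Iio t).indicator f s := by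
        intro s
        by_cases h : s < t <;> simp [hF, Set.indicator, h, mul_comm]
      rw [integral_congr_ae (ae_of_all _ this), integral_const_mul,
        setIntegral_indicator measurableSet_Iio]
      have h1 : Set.Ioi x ∩ Set.Iio t = Set.Ioo x t := rfl
      rw [h1, ← integral_Ioc_eq_integral_Ioo, tp_sub hfi (le_of_lt ht)]
    have swap : ∫ s in Set.Ioi x, ∫ t in Set.Ioi x, F s t
        = ∫ t in Set.Ioi x, ∫ s in Set.Ioi x, F s t := integral_integral_swap hFint
    have lhs_eq : ∫ s in Set.Ioi x, ∫ t in Set.Ioi x, F s t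
        = (∫ s in Set.Ioi x, f s * tp f s ^ (k + 1)) / (k + 1) := by
      rw [setIntegral_congr_fun measurableSet_Ioi inner1]
      rw [← integral_div]
      congr 1; ext s; ring
    have rhs_eq : ∫ t in Set.Ioi x, ∫ s in Set.Ioi x, F s t
        = tp f x * (tp f x ^ (k + 1) / (k + 1)) - ∫ t in Set.Ioi x, f t * tp f t ^ (k + 1) := by
      rw [setIntegral_congr_fun measurableSet_Ioi inner2]
      have : ∀ t, g t * (tp f x - tp f t) = tp f x * g t - f t * tp f t ^ (k + 1) := by
        intro t; simp only [hg]; ring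
      rw [integral_congr_ae (ae_of_all _ this),
        integral_sub (hgint.integrableOn.const_mul _) hgint1.integrableOn,
        integral_const_mul]
      rw [show (∫ t in Set.Ioi x, g t) = tp f x ^ (k + 1) / (k + 1) from ih x]
    set L := ∫ s in Set.Ioi x, f s * tp f s ^ (k + 1) with hL
    have hk1 : (0:ℝ) < (k:ℝ) + 1 := by positivity
    have heq : L / (k + 1) = tp f x * (tp f x ^ (k + 1) / (k + 1)) - L := by
      rw [← lhs_eq, swap, rhs_eq]
    have hmain : L = tp f x ^ (k + 1 + 1) / ((k:ℝ) + 1 + 1) := by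
      field_simp at heq
      rw [eq_div_iff (by positivity)]
      linear_combination heq
    rw [hmain]
    push_cast
    ring



lemma norm_exp_eq (l : ℂ) (s t : ℝ) :
    ‖Complex.exp (2 * Complex.I * l * ((s : ℂ) - (t : ℂ)))‖
      = Real.exp (-(2 * l.im * (s - t))) := by
  rw [Complex.norm_exp]
  congr 1
  simp [Complex.mul_re, Complex.mul_im]

lemma exp_int_le {σ : ℝ} (hσ : 0 < σ) {x s : ℝ} (hxs : x ≤ s) :
    ∫ t in Set.Ioc x s, Real.exp (-(4 * σ * (s - t))) ≤ 1 / (4 * σ) := by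
  have hfun : (fun t : ℝ => Real.exp (-(4 * σ * (s - t))))
      = fun t : ℝ => Real.exp (4 * σ * t - 4 * σ * s) := by
    funext t; congr 1; ring
  have hcont : Continuous (fun t : ℝ => Real.exp (4 * σ * t - 4 * σ * s)) := by continuity
  have hderiv : ∀ t ∈ Set.uIcc x s,
      HasDerivAt (fun t : ℝ => Real.exp (4 * σ * t - 4 * σ * s) / (4 * σ))
        (Real.exp (4 * σ * t - 4 * σ * s)) t := by
    intro t _
    have h1 : HasDerivAt (fun t : ℝ => 4 * σ * t - 4 * σ * s) (4 * σ) t := by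
      simpa using ((hasDerivAt_id t).const_mul (4 * σ)).sub_const (4 * σ * s)
    have h2 := (h1.exp).div_const (4 * σ)
    rw [mul_div_cancel_right₀ _ (by positivity : (4 * σ) ≠ 0)] at h2
    exact h2
  have heq : ∫ t in x..s, Real.exp (4 * σ * t - 4 * σ * s)
      = Real.exp (4 * σ * s - 4 * σ * s) / (4 * σ) - Real.exp (4 * σ * x - 4 * σ * s) / (4 * σ) :=
    intervalIntegral.integral_eq_sub_of_hasDerivAt hderiv (hcont.intervalIntegrable x s)
  rw [hfun, ← intervalIntegral.integral_of_le hxs, heq]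
  simp only [sub_self, Real.exp_zero]
  have : 0 < Real.exp (4 * σ * x - 4 * σ * s) := Real.exp_pos _
  rw [div_sub_div_same]
  exact div_le_div_of_nonneg_right (by linarith) (by positivity)

lemma sq_norm_integrable {q : ℝ → ℂ} (hq2 : MemLp q 2) :
    Integrable (fun t => ‖q t‖ ^ 2) := by
  have := hq2.integrable_norm_rpow (by norm_num) (by norm_num)
  simp only [ENNReal.toReal_ofNat] at this
  convert this using 2 with t
  rw [show ((2:ℝ)) = ((2:ℕ):ℝ) by norm_num, Real.rpow_natCast]

-- Cauchy-Schwarz bound on the inner integral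
lemma inner_cs {q : ℝ → ℂ} (hq2 : MemLp q 2) {σ : ℝ} (hσ : 0 < σ) {x s : ℝ} (hxs : x ≤ s) :
    ∫ t in Set.Ioc x s, Real.exp (-(2 * σ * (s - t))) * ‖q t‖
      ≤ Real.sqrt (∫ t : ℝ, ‖q t‖ ^ 2) / (2 * Real.sqrt σ) := by
  set μ := volume.restrict (Set.Ioc x s)
  have hE : Continuous (fun t : ℝ => Real.exp (-(2 * σ * (s - t)))) := by continuity
  have hEmem : MemLp (fun t : ℝ => Real.exp (-(2 * σ * (s - t)))) (ENNReal.ofReal 2) μ := by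
    refine MemLp.of_bound hE.aestronglyMeasurable 1 ?_
    rw [ae_restrict_iff' measurableSet_Ioc]
    filter_upwards with t ht
    rw [Real.norm_eq_abs, abs_of_nonneg (Real.exp_pos _).le]
    apply Real.exp_le_one_iff.2
    nlinarith [ht.2]
  have hqmem : MemLp (fun t => ‖q t‖) (ENNReal.ofReal 2) μ := by
    have : (ENNReal.ofReal 2) = 2 := by norm_num [ENNReal.ofReal_ofNat]
    rw [this]
    exact (hq2.norm).restrict _
  have hpq : Real.HolderConjugate 2 2 := by constructor <;> norm_num
  have H := integral_mul_le_Lp_mul_Lq_of_nonneg (μ := μ) hpq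
    (ae_of_all _ fun t => (Real.exp_pos _).le) (ae_of_all _ fun t => norm_nonneg _)
    hEmem hqmem
  have hrpow2 : ∀ a : ℝ, a ^ (2:ℝ) = a ^ 2 := fun a => by
    rw [show ((2:ℝ)) = ((2:ℕ):ℝ) by norm_num, Real.rpow_natCast]
  refine H.trans ?_
  have hA : (∫ t, (Real.exp (-(2 * σ * (s - t)))) ^ (2:ℝ) ∂μ) ^ ((1:ℝ)/2)
      ≤ Real.sqrt (1 / (4 * σ)) := by
    rw [← Real.sqrt_eq_rpow]
    apply Real.sqrt_le_sqrt
    have : ∀ t : ℝ, (Real.exp (-(2 * σ * (s - t)))) ^ (2:ℝ)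
        = Real.exp (-(4 * σ * (s - t))) := by
      intro t
      rw [hrpow2, ← Real.exp_nat_mul]
      congr 1; push_cast; ring
    calc (∫ t, (Real.exp (-(2 * σ * (s - t)))) ^ (2:ℝ) ∂μ)
        = ∫ t in Set.Ioc x s, Real.exp (-(4 * σ * (s - t))) := by
          exact integral_congr_ae (ae_of_all _ this)
      _ ≤ 1 / (4 * σ) := exp_int_le hσ hxs
  have hB : (∫ t, ‖q t‖ ^ (2:ℝ) ∂μ) ^ ((1:ℝ)/2) ≤ Real.sqrt (∫ t : ℝ, ‖q t‖ ^ 2) := by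
    rw [← Real.sqrt_eq_rpow]
    apply Real.sqrt_le_sqrt
    calc (∫ t, ‖q t‖ ^ (2:ℝ) ∂μ) = ∫ t in Set.Ioc x s, ‖q t‖ ^ 2 :=
          integral_congr_ae (ae_of_all _ fun t => hrpow2 _)
      _ ≤ ∫ t : ℝ, ‖q t‖ ^ 2 :=
          setIntegral_le_integral (sq_norm_integrable hq2)
            (ae_of_all _ fun t => by positivity)
  have hsq : Real.sqrt (1 / (4 * σ)) = 1 / (2 * Real.sqrt σ) := by
    rw [show (4 * σ) = (2 * Real.sqrt σ) ^ 2 by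
        rw [mul_pow, Real.sq_sqrt hσ.le]; ring]
    rw [one_div, Real.sqrt_inv, Real.sqrt_sq (by positivity), one_div]
  calc _ ≤ Real.sqrt (1 / (4 * σ)) * Real.sqrt (∫ t : ℝ, ‖q t‖ ^ 2) := by
        apply mul_le_mul hA hB (by positivity) (by positivity)
    _ = Real.sqrt (∫ t : ℝ, ‖q t‖ ^ 2) / (2 * Real.sqrt σ) := by
        rw [hsq]; ring

lemma gker_norm_le (q : ℝ → ℂ) (l : ℂ) {x s : ℝ} (hxs : x ≤ s) :
    ‖Gker q x s l‖ ≤ ‖q s‖ * ∫ t in Set.Ioc x s, Real.exp (-(2 * l.im * (s - t))) * ‖q t‖ := by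
  rw [Gker, norm_mul]
  have h1 : ‖(starRingEnd ℂ) (q s)‖ = ‖q s‖ := RCLike.norm_conj _
  rw [h1]
  apply mul_le_mul_of_nonneg_left ?_ (norm_nonneg _)
  calc ‖∫ t in x..s, Complex.exp (2 * Complex.I * l * ((s : ℂ) - (t : ℂ))) * q t‖
      ≤ ∫ t in Set.uIoc x s, ‖Complex.exp (2 * Complex.I * l * ((s : ℂ) - (t : ℂ))) * q t‖ :=
        intervalIntegral.norm_integral_le_integral_norm_uIoc
    _ = ∫ t in Set.Ioc x s, Real.exp (-(2 * l.im * (s - t))) * ‖q t‖ := by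
        rw [Set.uIoc_of_le hxs]
        refine integral_congr_ae (ae_of_all _ fun t => ?_)
        simp only [norm_mul, norm_exp_eq]

lemma gker_crude {q : ℝ → ℂ} (hq1 : Integrable q) (l : ℂ) (hl : 0 ≤ l.im)
    {x s : ℝ} (hxs : x ≤ s) :
    ‖Gker q x s l‖ ≤ ‖q s‖ * (tp (fun u => ‖q u‖) x - tp (fun u => ‖q u‖) s) := by
  refine (gker_norm_le q l hxs).trans ?_
  apply mul_le_mul_of_nonneg_left ?_ (norm_nonneg _)
  rw [← tp_sub hq1.norm hxs]
  refine integral_mono_of_nonneg (ae_of_all _ fun t => by positivity)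
    hq1.norm.integrableOn ((ae_restrict_iff' measurableSet_Ioc).2 ?_)
  filter_upwards with t ht
  have : Real.exp (-(2 * l.im * (s - t))) ≤ 1 := by
    apply Real.exp_le_one_iff.2
    nlinarith [ht.2]
  calc Real.exp (-(2 * l.im * (s - t))) * ‖q t‖ ≤ 1 * ‖q t‖ :=
        mul_le_mul_of_nonneg_right this (norm_nonneg _)
    _ = ‖q t‖ := one_mul _

lemma gker_fine {q : ℝ → ℂ} (hq2 : MemLp q 2) {l : ℂ} (hl : 0 < l.im)
    {x s : ℝ} (hxs : x ≤ s) :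
    ‖Gker q x s l‖ ≤ ‖q s‖ * (Real.sqrt (∫ t : ℝ, ‖q t‖ ^ 2) / (2 * Real.sqrt l.im)) :=
  (gker_norm_le q l hxs).trans
    (mul_le_mul_of_nonneg_left (inner_cs hq2 hl hxs) (norm_nonneg _))


lemma chi_bound {q : ℝ → ℂ} (hq1 : Integrable q) (hq2 : MemLp q 2) {l : ℂ} (hl : 0 < l.im) :
    ∀ (n : ℕ) (x : ℝ), ‖chiIter q (n + 1) x l‖
      ≤ (Real.sqrt (∫ t : ℝ, ‖q t‖ ^ 2) / (2 * Real.sqrt l.im))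
        * (tp (fun u => ‖q u‖) x ^ (2 * n + 1) / ((Nat.factorial (2 * n)) : ℝ)) := by
  set f : ℝ → ℝ := fun u => ‖q u‖ with hfdef
  have hfi : Integrable f := hq1.norm
  have hf : ∀ s, 0 ≤ f s := fun s => norm_nonneg _
  set D : ℝ := Real.sqrt (∫ t : ℝ, ‖q t‖ ^ 2) / (2 * Real.sqrt l.im) with hDdef
  have hD : 0 ≤ D := by
    apply div_nonneg (Real.sqrt_nonneg _)
    have := Real.sqrt_pos.2 hl
    positivity
  intro n
  induction n with
  | zero =>
    intro x
    have hxrep : chiIter q 1 x l = ∫ s in Set.Ioi x, Gker q x s l * chiIter q 0 s l := rfl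
    calc ‖chiIter q 1 x l‖ ≤ ∫ s in Set.Ioi x, ‖Gker q x s l * chiIter q 0 s l‖ := by
          rw [hxrep]; exact norm_integral_le_integral_norm _
      _ ≤ ∫ s in Set.Ioi x, f s * D := by
          refine integral_mono_of_nonneg (ae_of_all _ fun s => norm_nonneg _)
            ((hfi.mul_const D).integrableOn)
            ((ae_restrict_iff' measurableSet_Ioi).2 ?_)
          filter_upwards with s hs
          have : chiIter q 0 s l = 1 := rfl
          rw [this, mul_one]
          exact gker_fine hq2 hl (le_of_lt hs)
      _ = tp f x * D := by rw [integral_mul_const]; rfl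
      _ = D * (tp f x ^ (2 * 0 + 1) / ((Nat.factorial (2 * 0)) : ℝ)) := by
          simp [Nat.factorial]
          ring
  | succ n ih =>
    intro x
    have hxrep : chiIter q (n + 1 + 1) x l
        = ∫ s in Set.Ioi x, Gker q x s l * chiIter q (n + 1) s l := rfl
    set u : ℝ → ℝ :=
      fun s => f s * (tp f x - tp f s) * (D * (tp f s ^ (2 * n + 1) / ((Nat.factorial (2 * n)) : ℝ)))
      with hudef
    have hu_eq : u = fun s => (D / ((Nat.factorial (2 * n)) : ℝ)) *
        (tp f x * (f s * tp f s ^ (2 * n + 1)) - f s * tp f s ^ (2 * n + 1 + 1)) := by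
      funext s; simp only [hudef]; ring
    have hu_int : Integrable u := by
      rw [hu_eq]
      exact (((int_mul_pow hfi hf (2 * n + 1)).const_mul (tp f x)).sub
        (int_mul_pow hfi hf (2 * n + 1 + 1))).const_mul _
    have step1 : ‖chiIter q (n + 1 + 1) x l‖ ≤ ∫ s in Set.Ioi x, u s := by
      rw [hxrep]
      refine (norm_integral_le_integral_norm _).trans ?_
      refine integral_mono_of_nonneg (ae_of_all _ fun s => norm_nonneg _)
        hu_int.integrableOn ((ae_restrict_iff' measurableSet_Ioi).2 ?_)
      filter_upwards with s hs
      rw [norm_mul]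
      have h1 : ‖Gker q x s l‖ ≤ f s * (tp f x - tp f s) :=
        gker_crude hq1 l hl.le (le_of_lt hs)
      have h2 : ‖chiIter q (n + 1) s l‖ ≤ D * (tp f s ^ (2 * n + 1) / ((Nat.factorial (2 * n)) : ℝ)) := ih s
      exact mul_le_mul h1 h2 (norm_nonneg _)
        (mul_nonneg (hf s) (sub_nonneg.2 (tp_anti hfi hf (le_of_lt hs))))
    have step2 : ∫ s in Set.Ioi x, u s = (D / ((Nat.factorial (2 * n)) : ℝ)) *
        (tp f x * (tp f x ^ (2 * n + 1 + 1) / ((2 * n + 1 : ℕ) + 1 : ℝ))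
          - tp f x ^ (2 * n + 1 + 1 + 1) / ((2 * n + 1 + 1 : ℕ) + 1 : ℝ)) := by
      rw [hu_eq, integral_const_mul,
        integral_sub ((int_mul_pow hfi hf (2 * n + 1)).integrableOn.const_mul _)
          (int_mul_pow hfi hf (2 * n + 1 + 1)).integrableOn,
        integral_const_mul, moment hfi hf (2 * n + 1) x, moment hfi hf (2 * n + 1 + 1) x]
    have hfact : ((Nat.factorial (2 * (n + 1))) : ℝ) = (2 * (n : ℝ) + 2) * ((2 * (n : ℝ) + 1) * ((Nat.factorial (2 * n)) : ℝ)) := by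
      have h1 : 2 * (n + 1) = (2 * n + 1) + 1 := by ring
      rw [h1, Nat.factorial_succ, Nat.factorial_succ]
      push_cast
      ring
    have hT : 0 ≤ tp f x := tp_nonneg hf x
    set T := tp f x with hTdef
    set A : ℝ := ((Nat.factorial (2 * n)) : ℝ) with hAdef
    have hA : 0 < A := by
      rw [hAdef]
      exact_mod_cast Nat.factorial_pos _
    refine step1.trans ?_
    rw [step2]
    have e1 : (D / A) * (T * (T ^ (2 * n + 1 + 1) / ((2 * n + 1 : ℕ) + 1 : ℝ))
          - T ^ (2 * n + 1 + 1 + 1) / ((2 * n + 1 + 1 : ℕ) + 1 : ℝ))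
        = (D * T ^ (2 * n + 3)) * (1 / (A * (2 * (n:ℝ) + 2) * (2 * (n:ℝ) + 3))) := by
      push_cast
      have hc2 : (0:ℝ) < 2 * (n:ℝ) + 2 := by positivity
      have hc3 : (0:ℝ) < 2 * (n:ℝ) + 3 := by positivity
      field_simp
      ring
    have e2 : D * (T ^ (2 * (n + 1) + 1) / ((Nat.factorial (2 * (n + 1))) : ℝ))
        = (D * T ^ (2 * n + 3)) * (1 / ((2 * (n:ℝ) + 2) * ((2 * (n:ℝ) + 1) * A))) := by
      rw [hfact]
      have : 2 * (n + 1) + 1 = 2 * n + 3 := by ring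
      rw [this]
      ring
    rw [e1, e2]
    refine mul_le_mul_of_nonneg_left ?_ (by positivity)
    apply one_div_le_one_div_of_le (by positivity)
    nlinarith [hA]

end S14

theorem stmt14 (q : ℝ → ℂ) (hq1 : Integrable q) (hq2 : MemLp q 2) :
    ∀ (x : ℝ) (l : ℂ), 0 < l.im →
      ‖chiFun q x l - 1‖ ≤ PhiF q x * normL2 q * normL1 q / Real.sqrt l.im := by
  intro x l hl
  have hfi : Integrable (fun u => ‖q u‖) := hq1.norm
  have hf : ∀ s, 0 ≤ ‖q s‖ := fun s => norm_nonneg _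
  set T := S14.tp (fun u => ‖q u‖) x with hTdef
  have hT : 0 ≤ T := S14.tp_nonneg hf x
  set D : ℝ := Real.sqrt (∫ t : ℝ, ‖q t‖ ^ 2) / (2 * Real.sqrt l.im) with hD
  have hsq : 0 < Real.sqrt l.im := Real.sqrt_pos.2 hl
  have hD0 : 0 ≤ D := div_nonneg (Real.sqrt_nonneg _) (by positivity)
  have hL1 : 0 ≤ normL1 q := integral_nonneg fun t => norm_nonneg _
  have hTle : T ≤ normL1 q := S14.tp_le hfi hf x
  have hcosh : 0 ≤ Real.cosh T := (Real.cosh_pos T).le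
  have hn2 : 0 ≤ normL2 q := Real.sqrt_nonneg _
  have hterm : ∀ n : ℕ, ‖chiIter q (n + 1) x l‖
      ≤ D * normL1 q * (T ^ (2 * n) / ((Nat.factorial (2 * n)) : ℝ)) := by
    intro n
    refine (S14.chi_bound hq1 hq2 hl n x).trans ?_
    have hfac : (0:ℝ) < ((Nat.factorial (2 * n)) : ℝ) := by
      exact_mod_cast Nat.factorial_pos _
    have hpow : T ^ (2 * n + 1) ≤ normL1 q * T ^ (2 * n) := by
      rw [pow_succ]
      calc T ^ (2 * n) * T ≤ T ^ (2 * n) * normL1 q :=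
            mul_le_mul_of_nonneg_left hTle (pow_nonneg hT _)
        _ = normL1 q * T ^ (2 * n) := mul_comm _ _
    calc D * (T ^ (2 * n + 1) / ((Nat.factorial (2 * n)) : ℝ))
        ≤ D * ((normL1 q * T ^ (2 * n)) / ((Nat.factorial (2 * n)) : ℝ)) := by
          apply mul_le_mul_of_nonneg_left ?_ hD0
          gcongr
      _ = D * normL1 q * (T ^ (2 * n) / ((Nat.factorial (2 * n)) : ℝ)) := by ring
  have hsumb : Summable (fun n : ℕ => T ^ (2 * n) / ((Nat.factorial (2 * n)) : ℝ)) :=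
    (Real.hasSum_cosh T).summable
  have hsum2 : Summable (fun n : ℕ =>
      D * normL1 q * (T ^ (2 * n) / ((Nat.factorial (2 * n)) : ℝ))) := hsumb.mul_left _
  have hPhi : PhiF q x = Real.cosh T := rfl
  have hn2e : normL2 q = Real.sqrt (∫ t : ℝ, ‖q t‖ ^ 2) := rfl
  by_cases hs : Summable (fun n : ℕ => chiIter q (n + 1) x l)
  · have hs' : Summable (fun n : ℕ => ‖chiIter q (n + 1) x l‖) := summable_norm_iff.mpr hs
    have h1 : chiFun q x l - 1 = ∑' n : ℕ, chiIter q (n + 1) x l := by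
      rw [chiFun]; ring
    calc ‖chiFun q x l - 1‖ = ‖∑' n : ℕ, chiIter q (n + 1) x l‖ := by rw [h1]
      _ ≤ ∑' n : ℕ, ‖chiIter q (n + 1) x l‖ := norm_tsum_le_tsum_norm hs'
      _ ≤ ∑' n : ℕ, D * normL1 q * (T ^ (2 * n) / ((Nat.factorial (2 * n)) : ℝ)) :=
          Summable.tsum_le_tsum hterm hs' hsum2
      _ = D * normL1 q * Real.cosh T := by rw [tsum_mul_left, ← Real.cosh_eq_tsum]
      _ ≤ PhiF q x * normL2 q * normL1 q / Real.sqrt l.im := by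
          rw [hPhi]
          have heq : D * normL1 q * Real.cosh T
              = Real.cosh T * normL2 q * normL1 q / (2 * Real.sqrt l.im) := by
            rw [hD, hn2e]; ring
          rw [heq]
          exact div_le_div₀ (by positivity) le_rfl hsq (by linarith)
  · have h0 : (∑' n : ℕ, chiIter q (n + 1) x l) = 0 := tsum_eq_zero_of_not_summable hs
    have h1 : chiFun q x l - 1 = 0 := by rw [chiFun, h0]; ring
    rw [h1, norm_zero]
    apply div_nonneg _ (Real.sqrt_nonneg _)
    rw [hPhi]
    exact mul_nonneg (mul_nonneg hcosh hn2) hL1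
end
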